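/- arXiv:1608.02242 — 6 statements merged into one kernel-verified Lean document; each statement's English description precedes it below -/
import Mathlib

section
/- With the notation of the context, for every n ∈ ℕ: cl(E_n) ∩ (∂βX × ∂βX) = ⋃_{w ∈ F_S, |w| ≤ n} {(η, τ̄(w)(η)) : η ∈ ∂βX}. That is, the boundary part of the closed n-neighbourhood of the diagonal equals the union, over words w in the free group on S of length at most n, of the boundary parts of the τ-diagonals A_w = {(η, τ̄(w)(η))}. -/
open scoped BigOperators symmDiff Classical

universe u v

/-- A sofic approximation of a group `Γ` generated by a finite symmetric set `S`. -/
structure SoficApprox (Γ : Type u) [Group Γ] (S : Finset Γ) where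
  F : ℕ → Finset Γ
  F_mono : Monotone F
  F_one : ∀ i, (1 : Γ) ∈ F i
  F_exhausts : ∀ g : Γ, ∃ i, g ∈ F i
  eps : ℕ → ℝ
  eps_pos : ∀ i, 0 < eps i
  eps_lim : Filter.Tendsto eps Filter.atTop (nhds 0)
  X : ℕ → Type
  finX : ∀ i, Finite (X i)
  neX : ∀ i, Nonempty (X i)
  sigma : (i : ℕ) → Γ → Equiv.Perm (X i)
  Y : (i : ℕ) → Set (X i)
  Y_large : ∀ i, (1 - eps i) * (Nat.card (X i) : ℝ) ≤ ((Y i).ncard : ℝ)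
  sigma_mul : ∀ i, ∀ g ∈ F i, ∀ h ∈ F i, ∀ y ∈ Y i, sigma i g (sigma i h y) = sigma i (g * h) y
  sigma_free : ∀ i, ∀ g ∈ F i, g ≠ 1 → ∀ y ∈ Y i, sigma i g y ≠ y

namespace SoficApprox

variable {Γ : Type u} [Group Γ] {S : Finset Γ}

/-- The total space (space of graphs) `X = ⨆ i, X i`. -/
abbrev Total (A : SoficApprox Γ S) : Type := Σ i, A.X i

/-- The bijection `σ(g)` of the total space acting as `σ_i(g)` on each `X i`. -/
def perm (A : SoficApprox Γ S) (g : Γ) : Equiv.Perm A.Total :=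
  Equiv.sigmaCongrRight fun i => A.sigma i g

/-- The continuous extension `σ̄(g)` of `σ(g)` to the Stone–Čech compactification. -/
def permBar (A : SoficApprox Γ S) (g : Γ) : Ultrafilter A.Total → Ultrafilter A.Total :=
  Ultrafilter.map (A.perm g)

/-- The union `Y = ⨆ i, Y i` inside the total space. -/
def Ytot (A : SoficApprox Γ S) : Set A.Total := {p | p.2 ∈ A.Y p.1}

/-- `∂Y`: free ultrafilters containing `Y`. -/
def bdY (A : SoficApprox Γ S) : Set (Ultrafilter A.Total) :=
  {η | (∀ p : A.Total, η ≠ pure p) ∧ A.Ytot ∈ η}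

/-- The core `Z = ⋂_{g ∈ Γ} σ̄(g)''(∂Y)` of the sofic boundary. -/
def core (A : SoficApprox Γ S) : Set (Ultrafilter A.Total) :=
  ⋂ g : Γ, A.permBar g '' A.bdY

/-- The `S`-labelled graph structure on `X i`, with edges `{x, σ_i(s)(x)}` for `s ∈ S`. -/
def graph (A : SoficApprox Γ S) (i : ℕ) : SimpleGraph (A.X i) where
  Adj x y := x ≠ y ∧ ∃ s ∈ S, A.sigma i s x = y ∨ A.sigma i s y = x
  symm := ⟨fun x y h => ⟨h.1.symm, by obtain ⟨s, hs, h'⟩ := h.2; exact ⟨s, hs, h'.symm⟩⟩⟩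
  loopless := ⟨fun x h => h.1 rfl⟩

/-- An admissible metric on the total space: a metric restricting to the edge-path
metric on each `X i` and with distances between distinct components tending to `∞`. -/
def Admissible (A : SoficApprox Γ S) (d : A.Total → A.Total → ℝ) : Prop :=
  (∀ p q, d p q = d q p) ∧
  (∀ p q r, d p r ≤ d p q + d q r) ∧
  (∀ p q, d p q = 0 ↔ p = q) ∧
  (∀ p q, 0 ≤ d p q) ∧
  (∀ (i : ℕ) (x y : A.X i), d ⟨i, x⟩ ⟨i, y⟩ = ((A.graph i).dist x y : ℝ)) ∧
  (∀ R : ℝ, ∃ N : ℕ, ∀ i j : ℕ, i ≠ j → N ≤ i + j →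
      ∀ (x : A.X i) (y : A.X j), R < d ⟨i, x⟩ ⟨j, y⟩)

/-- The entourage `E_R` viewed inside `βX × βX`. -/
def ER (A : SoficApprox Γ S) (d : A.Total → A.Total → ℝ) (R : ℝ) :
    Set (Ultrafilter A.Total × Ultrafilter A.Total) :=
  {p | ∃ a b : A.Total, d a b ≤ R ∧ p = (pure a, pure b)}

end SoficApprox

/-- Word length of `g` with respect to the generating set `S`. -/
noncomputable def wordLength {Γ : Type u} [Group Γ] (S : Finset Γ) (g : Γ) : ℕ :=
  sInf {n | ∃ l : List Γ, (∀ x ∈ l, x ∈ S) ∧ l.length = n ∧ l.prod = g}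

/-- Word length of an element of a free group. -/
noncomputable def fgLength {α : Type v} (w : FreeGroup α) : ℕ :=
  sInf {n | ∃ l : List (α × Bool), l.length = n ∧ FreeGroup.mk l = w}

/-- The canonical homomorphism `F_S → Γ` extending the inclusion `S ↪ Γ`. -/
noncomputable def pihom {Γ : Type u} [Group Γ] (S : Finset Γ) : FreeGroup ↥S →* Γ :=
  FreeGroup.lift fun s => (s : Γ)

/-- The homomorphism `τ : F_S → Sym(X)` with `τ(s) = σ(s)` for `s ∈ S`. -/
noncomputable def SoficApprox.tau {Γ : Type u} [Group Γ] {S : Finset Γ}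
    (A : SoficApprox Γ S) : FreeGroup ↥S →* Equiv.Perm A.Total :=
  FreeGroup.lift fun s => A.perm (s : Γ)


section Helpers

open SoficApprox

lemma fgLength_mk_le {α : Type v} (l : List (α × Bool)) :
    fgLength (FreeGroup.mk l) ≤ l.length :=
  Nat.sInf_le ⟨l, rfl, rfl⟩

lemma exists_list_fgLength {α : Type v} (w : FreeGroup α) :
    ∃ l : List (α × Bool), l.length = fgLength w ∧ FreeGroup.mk l = w := by
  classical
  have hne : {n | ∃ l : List (α × Bool), l.length = n ∧ FreeGroup.mk l = w}.Nonempty :=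
    ⟨w.toWord.length, w.toWord, rfl, FreeGroup.mk_toWord⟩
  exact Nat.sInf_mem hne

lemma fgLength_mul_le {α : Type v} (u v : FreeGroup α) :
    fgLength (u * v) ≤ fgLength u + fgLength v := by
  obtain ⟨l, hl, hm⟩ := exists_list_fgLength u
  obtain ⟨l', hl', hm'⟩ := exists_list_fgLength v
  calc fgLength (u * v) = fgLength (FreeGroup.mk (l ++ l')) := by
        rw [← FreeGroup.mul_mk, hm, hm']
    _ ≤ (l ++ l').length := fgLength_mk_le _
    _ = fgLength u + fgLength v := by rw [List.length_append, hl, hl']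

lemma fgLength_one {α : Type v} : fgLength (1 : FreeGroup α) ≤ 0 := by
  rw [FreeGroup.one_eq_mk]; exact fgLength_mk_le []

lemma fgLength_of_le {α : Type v} (a : α) : fgLength (FreeGroup.of a) ≤ 1 :=
  fgLength_mk_le [(a, true)]

lemma fgLength_of_inv_le {α : Type v} (a : α) : fgLength (FreeGroup.of a)⁻¹ ≤ 1 := by
  have : (FreeGroup.of a)⁻¹ = FreeGroup.mk [(a, false)] := by
    rw [FreeGroup.of, FreeGroup.inv_mk]; simp [FreeGroup.invRev]
  rw [this]; exact fgLength_mk_le _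

lemma finite_fgLength_le {α : Type v} [Finite α] (n : ℕ) :
    {w : FreeGroup α | fgLength w ≤ n}.Finite := by
  have h : {w : FreeGroup α | fgLength w ≤ n} ⊆
      (fun l : List (α × Bool) => FreeGroup.mk l) '' {l | l.length ≤ n} := by
    intro w hw
    obtain ⟨l, hl, hm⟩ := exists_list_fgLength w
    exact ⟨l, by rw [Set.mem_setOf_eq, hl]; exact hw, hm⟩
  exact ((List.finite_length_le (α × Bool) n).image _).subset h

variable {Γ : Type u} [Group Γ] {S : Finset Γ}

lemma SoficApprox.tau_of (A : SoficApprox Γ S) (s : ↥S) :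
    A.tau (FreeGroup.of s) = A.perm (s : Γ) := by
  simp [SoficApprox.tau]

lemma SoficApprox.perm_apply (A : SoficApprox Γ S) (g : Γ) (i : ℕ) (x : A.X i) :
    A.perm g ⟨i, x⟩ = ⟨i, A.sigma i g x⟩ := rfl

lemma SoficApprox.exists_word_of_walk (A : SoficApprox Γ S)
    {i : ℕ} {x y : A.X i} (p : (A.graph i).Walk x y) :
    ∃ w : FreeGroup ↥S, fgLength w ≤ p.length ∧ A.tau w ⟨i, x⟩ = ⟨i, y⟩ := by
  induction p with
  | nil =>
      exact ⟨1, by simpa using fgLength_one, by simp⟩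
  | @cons x v y h p ih =>
      obtain ⟨w', hw'len, hw'⟩ := ih
      have hne := h.1
      obtain ⟨s, hs, hcase⟩ := h.2
      rcases hcase with hc | hc
      · refine ⟨w' * FreeGroup.of ⟨s, hs⟩, ?_, ?_⟩
        · calc fgLength (w' * FreeGroup.of ⟨s, hs⟩)
              ≤ fgLength w' + fgLength (FreeGroup.of (⟨s, hs⟩ : ↥S)) := fgLength_mul_le _ _
            _ ≤ p.length + 1 := add_le_add hw'len (fgLength_of_le _)
            _ = (SimpleGraph.Walk.cons h p).length := by
                simp [SimpleGraph.Walk.length_cons]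
        · rw [map_mul]
          show A.tau w' (A.tau (FreeGroup.of ⟨s, hs⟩) ⟨i, x⟩) = ⟨i, y⟩
          rw [A.tau_of, A.perm_apply, hc]
          exact hw'
      · refine ⟨w' * (FreeGroup.of ⟨s, hs⟩)⁻¹, ?_, ?_⟩
        · calc fgLength (w' * (FreeGroup.of ⟨s, hs⟩)⁻¹)
              ≤ fgLength w' + fgLength (FreeGroup.of (⟨s, hs⟩ : ↥S))⁻¹ := fgLength_mul_le _ _
            _ ≤ p.length + 1 := add_le_add hw'len (fgLength_of_inv_le _)
            _ = (SimpleGraph.Walk.cons h p).length := by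
                simp [SimpleGraph.Walk.length_cons]
        · rw [map_mul, map_inv]
          show A.tau w' ((A.tau (FreeGroup.of ⟨s, hs⟩))⁻¹ ⟨i, x⟩) = ⟨i, y⟩
          rw [A.tau_of]
          have : (A.perm (s : Γ))⁻¹ (⟨i, x⟩ : A.Total) = ⟨i, v⟩ := by
            apply (A.perm (s : Γ)).injective
            rw [Equiv.Perm.inv_def, Equiv.apply_symm_apply, A.perm_apply, hc]
          rw [show ((⟨s, hs⟩ : ↥S) : Γ) = s from rfl, this]
          exact hw'

lemma SoficApprox.graph_dist_le_one (A : SoficApprox Γ S) {i : ℕ} {x y : A.X i}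
    (s : Γ) (hs : s ∈ S) (h : A.sigma i s x = y ∨ A.sigma i s y = x) :
    (A.graph i).dist x y ≤ 1 := by
  by_cases hxy : x = y
  · subst hxy
    rw [SimpleGraph.dist_self]
    norm_num
  · have hadj : (A.graph i).Adj x y := ⟨hxy, s, hs, h⟩
    calc (A.graph i).dist x y ≤ (SimpleGraph.Walk.cons hadj SimpleGraph.Walk.nil).length :=
          SimpleGraph.dist_le _
      _ = 1 := by simp

lemma SoficApprox.dist_tau_single_le (A : SoficApprox Γ S)
    (d : A.Total → A.Total → ℝ) (hd : A.Admissible d)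
    (s : ↥S) (b : Bool) (q : A.Total) :
    d q (A.tau (FreeGroup.mk [(s, b)]) q) ≤ 1 := by
  obtain ⟨i, z⟩ := q
  obtain ⟨hsymm, htri, hzero, hnonneg, hgraph, hfar⟩ := hd
  cases b with
  | true =>
      have h1 : FreeGroup.mk [(s, true)] = FreeGroup.of s := rfl
      rw [h1, A.tau_of, A.perm_apply, hgraph]
      have := A.graph_dist_le_one (x := z) (y := A.sigma i (s : Γ) z) (s : Γ) s.2 (Or.inl rfl)
      exact_mod_cast this
  | false =>
      have h1 : FreeGroup.mk [(s, false)] = (FreeGroup.of s)⁻¹ := by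
        rw [FreeGroup.of, FreeGroup.inv_mk]; simp [FreeGroup.invRev]
      rw [h1, map_inv, A.tau_of]
      have h2 : (A.perm ((s : ↥S) : Γ))⁻¹ (⟨i, z⟩ : A.Total)
          = ⟨i, (A.sigma i (s : Γ))⁻¹ z⟩ := by
        apply (A.perm ((s : ↥S) : Γ)).injective
        rw [Equiv.Perm.inv_def, Equiv.apply_symm_apply, A.perm_apply]
        simp
      rw [h2, hgraph]
      have := A.graph_dist_le_one (x := z) (y := (A.sigma i (s : Γ))⁻¹ z) (s : Γ) s.2
        (Or.inr (by simp))
      exact_mod_cast this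

lemma SoficApprox.dist_tau_le (A : SoficApprox Γ S)
    (d : A.Total → A.Total → ℝ) (hd : A.Admissible d)
    (l : List (↥S × Bool)) (q : A.Total) :
    d q (A.tau (FreeGroup.mk l) q) ≤ l.length := by
  induction l generalizing q with
  | nil =>
      have : FreeGroup.mk ([] : List (↥S × Bool)) = 1 := FreeGroup.one_eq_mk.symm
      rw [this, map_one]
      simp only [Equiv.Perm.coe_one, id_eq, List.length_nil, Nat.cast_zero]
      exact le_of_eq ((hd.2.2.1 q q).2 rfl)
  | cons hd' tl ih =>
      obtain ⟨s, b⟩ := hd'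
      have hsplit : FreeGroup.mk ((s, b) :: tl) = FreeGroup.mk [(s, b)] * FreeGroup.mk tl := by
        rw [FreeGroup.mul_mk]; rfl
      rw [hsplit, map_mul]
      have htri := hd.2.1 q (A.tau (FreeGroup.mk tl) q)
        (A.tau (FreeGroup.mk [(s, b)]) (A.tau (FreeGroup.mk tl) q))
      have h1 := ih q
      have h2 := A.dist_tau_single_le d hd s b (A.tau (FreeGroup.mk tl) q)
      calc d q ((A.tau (FreeGroup.mk [(s, b)])) ((A.tau (FreeGroup.mk tl)) q)) ≤
            d q (A.tau (FreeGroup.mk tl) q)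
            + d (A.tau (FreeGroup.mk tl) q)
              (A.tau (FreeGroup.mk [(s, b)]) (A.tau (FreeGroup.mk tl) q)) := htri
        _ ≤ tl.length + 1 := add_le_add h1 h2
        _ = ((s, b) :: tl).length := by push_cast [List.length_cons]; ring

lemma ultrafilter_ne_iff {α : Type v} {u v : Ultrafilter α} (h : u ≠ v) :
    ∃ s, s ∈ u ∧ s ∉ v := by
  by_contra hc
  push_neg at hc
  have hle : (↑v : Filter α) ≤ ↑u := fun s hs => hc s hs
  exact h (Ultrafilter.coe_le_coe.1 hle).symm

end Helpers

open SoficApprox in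
/-- **The boundary of `E_n` is covered by the `τ`-diagonals.**
For a sofic approximation with connected approximating graphs and an admissible metric `d`,
the boundary part of the closed `n`-neighbourhood of the diagonal is the union, over words
`w` in the free group on `S` of length at most `n`, of the boundary parts of the
`τ`-diagonals `A_w = {(η, τ̄(w)(η))}`. -/
theorem boundary_entourage_eq_union_tau_diagonals
    {Γ : Type u} [Group Γ] {S : Finset Γ}
    (hSsymm : ∀ s ∈ S, s⁻¹ ∈ S)
    (hSgen : Subgroup.closure (S : Set Γ) = ⊤)
    (A : SoficApprox Γ S)
    (hconn : ∀ i, (A.graph i).Connected)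
    (d : A.Total → A.Total → ℝ) (hd : A.Admissible d)
    (n : ℕ) :
    closure (A.ER d (n : ℝ)) ∩
        ({η : Ultrafilter A.Total | ∀ q : A.Total, η ≠ pure q} ×ˢ
         {η : Ultrafilter A.Total | ∀ q : A.Total, η ≠ pure q}) =
      ⋃ w ∈ {w : FreeGroup ↥S | fgLength w ≤ n},
        {p : Ultrafilter A.Total × Ultrafilter A.Total |
          ∃ η : Ultrafilter A.Total, (∀ q : A.Total, η ≠ pure q) ∧
            p = (η, Ultrafilter.map (A.tau w) η)} := by
  classical
  obtain ⟨hsymm, htri, hzero, hnonneg, hgraph, hfar⟩ := hd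
  ext p
  obtain ⟨η, ξ⟩ := p
  simp only [Set.mem_inter_iff, Set.mem_prod, Set.mem_setOf_eq, Set.mem_iUnion]
  constructor
  · rintro ⟨hcl, hηfree, hξfree⟩
    -- choose N large enough
    obtain ⟨N, hN⟩ := hfar (n : ℝ)
    -- finiteness of short words
    have Wfin : {w : FreeGroup ↥S | fgLength w ≤ n}.Finite := finite_fgLength_le n
    by_contra hcon
    push_neg at hcon
    have hne : ∀ w : FreeGroup ↥S, fgLength w ≤ n →
        ξ ≠ Ultrafilter.map (A.tau w) η := by
      intro w hw heq
      exact hcon w hw η hηfree (by rw [heq])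
    -- choose separating sets
    have hch : ∀ w : FreeGroup ↥S, ∃ B : Set A.Total,
        B ∈ ξ ∧ (fgLength w ≤ n → ((A.tau w) ⁻¹' B)ᶜ ∈ η) := by
      intro w
      by_cases hw : fgLength w ≤ n
      · obtain ⟨B, hB1, hB2⟩ := ultrafilter_ne_iff (hne w hw)
        refine ⟨B, hB1, fun _ => ?_⟩
        rw [Ultrafilter.compl_mem_iff_notMem]
        rw [Ultrafilter.mem_map] at hB2
        exact hB2
      · exact ⟨Set.univ, Filter.univ_mem, fun h => absurd h hw⟩
    choose B hBξ hBη using hch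
    -- the large-index set
    have hsmallfin : {p : A.Total | p.1 < N}.Finite := by
      have hsub : {p : A.Total | p.1 < N} ⊆
          ⋃ k ∈ Finset.range N, Set.range (fun x : A.X k => (⟨k, x⟩ : A.Total)) := by
        rintro ⟨k, x⟩ hk
        exact Set.mem_biUnion (Finset.mem_range.2 hk) ⟨x, rfl⟩
      refine (Set.Finite.biUnion (Finset.range N).finite_toSet fun k _ => ?_).subset hsub
      haveI := A.finX k
      exact Set.finite_range _
    have hBig : {p : A.Total | p.1 < N}ᶜ ∈ η := by
      rw [Ultrafilter.compl_mem_iff_notMem]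
      intro hmem
      obtain ⟨a, _, ha⟩ := Ultrafilter.eq_pure_of_finite_mem hsmallfin hmem
      exact hηfree a ha
    -- sets for the closure argument
    set U : Set A.Total :=
      {p : A.Total | p.1 < N}ᶜ ∩ ⋂ w ∈ {w : FreeGroup ↥S | fgLength w ≤ n},
        ((A.tau w) ⁻¹' (B w))ᶜ with hU
    set V : Set A.Total := ⋂ w ∈ {w : FreeGroup ↥S | fgLength w ≤ n}, B w with hV
    have hUη : U ∈ η :=
      Filter.inter_mem hBig ((Filter.biInter_mem Wfin).2 fun w hw => hBη w hw)
    have hVξ : V ∈ ξ := (Filter.biInter_mem Wfin).2 fun w _ => hBξ w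
    -- apply closure membership
    have hopen : IsOpen ({u : Ultrafilter A.Total | U ∈ u} ×ˢ
        {u : Ultrafilter A.Total | V ∈ u}) :=
      (ultrafilter_isOpen_basic U).prod (ultrafilter_isOpen_basic V)
    obtain ⟨q, hq1, hq2⟩ := mem_closure_iff.1 hcl _ hopen ⟨hUη, hVξ⟩
    obtain ⟨a, b, hab, rfl⟩ := hq2
    obtain ⟨haU, hbV⟩ := hq1
    rw [Set.mem_setOf_eq, Ultrafilter.mem_pure] at haU hbV
    obtain ⟨haBig, haInter⟩ := haU
    obtain ⟨i, x⟩ := a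
    obtain ⟨j, y⟩ := b
    have hiN : N ≤ i := not_lt.1 haBig
    have hij : i = j := by
      by_contra hij
      exact absurd hab (not_le.2 (hN i j hij (le_trans hiN (Nat.le_add_right i j)) x y))
    subst hij
    -- same component: get a short word
    have hdist : ((A.graph i).dist x y : ℝ) ≤ (n : ℝ) := by
      rw [← hgraph]; exact hab
    have hdist' : (A.graph i).dist x y ≤ n := by exact_mod_cast hdist
    obtain ⟨pw, hpw⟩ := (hconn i).exists_walk_length_eq_dist x y
    obtain ⟨w, hwlen, hwmap⟩ := A.exists_word_of_walk pw
    have hwn : fgLength w ≤ n := le_trans hwlen (hpw ▸ hdist')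
    have h1 : (⟨i, x⟩ : A.Total) ∈ ((A.tau w) ⁻¹' (B w))ᶜ :=
      Set.mem_iInter₂.mp haInter w hwn
    have h2 : (⟨i, y⟩ : A.Total) ∈ B w := Set.mem_iInter₂.mp hbV w hwn
    exact h1 (by rw [Set.mem_preimage, hwmap]; exact h2)
  · rintro ⟨w, hw, ηw, hηfree, heq⟩
    simp only [Prod.mk.injEq] at heq
    obtain ⟨h1, h2⟩ := heq
    subst h1
    subst h2
    refine ⟨?_, hηfree, ?_⟩
    · -- closure membership via tendsto
      have hlist := exists_list_fgLength w
      obtain ⟨l, hl, hml⟩ := hlist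
      have hdle : ∀ a : A.Total, d a (A.tau w a) ≤ (n : ℝ) := by
        intro a
        have := A.dist_tau_le d ⟨hsymm, htri, hzero, hnonneg, hgraph, hfar⟩ l a
        rw [hml] at this
        refine le_trans this ?_
        exact_mod_cast (hl ▸ hw : l.length ≤ n)
      have ht1 : Filter.Tendsto (fun a : A.Total => (pure a : Ultrafilter A.Total))
          ↑η (nhds η) := Ultrafilter.tendsto_pure_self η
      have ht2 : Filter.Tendsto (fun a : A.Total => (pure (A.tau w a) : Ultrafilter A.Total))
          ↑η (nhds (Ultrafilter.map (A.tau w) η)) := by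
        have hmap : Filter.Tendsto (A.tau w) ↑η ↑(Ultrafilter.map (A.tau w) η) := by
          rw [Ultrafilter.coe_map]; exact Filter.tendsto_map
        exact (Ultrafilter.tendsto_pure_self (Ultrafilter.map (A.tau w) η)).comp hmap
      have htt := ht1.prodMk_nhds ht2
      refine mem_closure_of_tendsto htt (Filter.Eventually.of_forall fun a => ?_)
      exact ⟨a, A.tau w a, hdle a, rfl⟩
    · -- second coordinate is free
      intro q hq
      apply hηfree ((A.tau w).symm q)
      have hinv : Ultrafilter.map (A.tau w).symm (Ultrafilter.map (A.tau w) η) = η := by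
        rw [show Ultrafilter.map (⇑(A.tau w).symm) (Ultrafilter.map (⇑(A.tau w)) η)
            = Ultrafilter.map ((⇑(A.tau w).symm) ∘ (⇑(A.tau w))) η from rfl,
          Equiv.symm_comp_self, Ultrafilter.map_id]
      rw [← hinv, hq, Ultrafilter.map_pure]
end

section
/- For every free ultrafilter η on X with Y ∈ η and all g, h ∈ Γ, one has σ̄(g)(σ̄(h)(η)) = σ̄(gh)(η); moreover σ̄(g)(η) ≠ η for every g ∈ Γ \ {1}. In other words, the maps σ̄(g) define a free action of Γ on ∂Y. -/
open scoped BigOperators symmDiff Classical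

universe u v

open Equiv Equiv.Perm

lemma exists_threeColoring {X : Type} [Finite X] (π : Equiv.Perm X) :
    ∃ c : X → Fin 3, ∀ x, π x ≠ x → c (π x) ≠ c x := by
  classical
  let s : Setoid X := ⟨π.SameCycle, ⟨SameCycle.refl π, SameCycle.symm, SameCycle.trans⟩⟩
  let rep : X → X := fun x => (Quotient.mk s x).out
  have rep_spec : ∀ x, π.SameCycle (rep x) x := fun x => Quotient.mk_out (s := s) x
  have rep_apply : ∀ x, rep (π x) = rep x := by
    intro x
    have : Quotient.mk s (π x) = Quotient.mk s x :=
      Quotient.sound (Setoid.symm (Equiv.Perm.sameCycle_apply_right.mpr (SameCycle.refl π x)))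
    simp only [rep, this]
  have hex : ∀ x, ∃ k : ℕ, (π ^ k) (rep x) = x := by
    intro x
    obtain ⟨i, _, hi⟩ := (rep_spec x).exists_pow_eq'
    exact ⟨i, hi⟩
  let k : X → ℕ := fun x => Nat.find (hex x)
  have hk : ∀ x, (π ^ k x) (rep x) = x := fun x => Nat.find_spec (hex x)
  let m : X → ℕ := fun x => Function.minimalPeriod π (rep x)
  have hmper : ∀ x, (π ^ m x) (rep x) = rep x := fun x =>
    Function.isPeriodicPt_minimalPeriod (⇑π) (rep x)
  have hmpos : ∀ x, 0 < m x := by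
    intro x
    refine Function.IsPeriodicPt.minimalPeriod_pos (orderOf_pos π) ?_
    show π^[orderOf π] (rep x) = rep x
    rw [← Equiv.Perm.coe_pow, pow_orderOf_eq_one]; rfl
  have hkm : ∀ x, k x < m x := by
    intro x
    by_contra h
    push_neg at h
    have h1 : (π ^ (k x - m x)) (rep x) = x := by
      have : (π ^ (k x - m x)) ((π ^ m x) (rep x)) = x := by
        rw [← Equiv.Perm.mul_apply, ← pow_add, Nat.sub_add_cancel h]
        exact hk x
      rwa [hmper x] at this
    have hlt : k x - m x < k x := by have := hmpos x; omega
    exact Nat.find_min (hex x) hlt h1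
  have hinj : ∀ x a b, a < m x → b < m x → (π ^ a) (rep x) = (π ^ b) (rep x) → a = b := by
    intro x a b ha hb hab
    have := Function.iterate_injOn_Iio_minimalPeriod (f := ⇑π) (x := rep x)
    exact this (by simpa [m] using ha) (by simpa [m] using hb) (by simpa only [Equiv.Perm.coe_pow] using hab)
  have happ : ∀ x, (π ^ (k x + 1)) (rep x) = π x := by
    intro x
    rw [pow_succ', Equiv.Perm.mul_apply, hk x]
  have hm2 : ∀ x, π x ≠ x → 2 ≤ m x := by
    intro x hx
    rcases Nat.lt_or_ge (m x) 2 with h | h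
    · have h1 : m x = 1 := by have := hmpos x; omega
      have hfix : π (rep x) = rep x := by have := hmper x; rwa [h1, pow_one] at this
      have hall : ∀ n, (π ^ n) (rep x) = rep x := by
        intro n
        induction n with
        | zero => simp
        | succ n ih => rw [pow_succ, Equiv.Perm.mul_apply, hfix, ih]
      have e1 : π x = rep x := (happ x).symm.trans (hall _)
      have e2 : x = rep x := (hk x).symm.trans (hall _)
      exact absurd (e1.trans e2.symm) hx
    · exact h
  have hknext : ∀ x, π x ≠ x → k (π x) = if k x + 1 = m x then 0 else k x + 1 := by
    intro x hx
    have hreq : rep (π x) = rep x := rep_apply x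
    have hmeq : m (π x) = m x := by simp only [m, hreq]
    by_cases hc : k x + 1 = m x
    · rw [if_pos hc]
      have hpr : π x = rep x := by rw [← happ x, hc, hmper x]
      have h0 : (π ^ (0 : ℕ)) (rep (π x)) = π x := by
        rw [pow_zero, hreq, hpr]; rfl
      exact Nat.le_zero.mp (Nat.find_min' (hex (π x)) h0)
    · rw [if_neg hc]
      have h1 : (π ^ (k x + 1)) (rep (π x)) = π x := by rw [hreq]; exact happ x
      have hle : k (π x) ≤ k x + 1 := Nat.find_min' (hex (π x)) h1
      refine hinj (π x) _ _ ?_ ?_ ?_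
      · rw [hmeq]; have := hkm x; omega
      · rw [hmeq]; have := hkm x; omega
      · rw [hk (π x), hreq, happ x]
  refine ⟨fun x => if k x + 1 = m x then 2 else if k x % 2 = 0 then 0 else 1, ?_⟩
  intro x hx
  have h2 := hm2 x hx
  have hmeq : m (π x) = m x := by simp only [m, rep_apply x]
  have hkn := hknext x hx
  show (if k (π x) + 1 = m (π x) then (2 : Fin 3) else if k (π x) % 2 = 0 then 0 else 1) ≠
    (if k x + 1 = m x then 2 else if k x % 2 = 0 then 0 else 1)
  rw [hkn, hmeq]
  by_cases hc : k x + 1 = m x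
  · rw [if_pos hc, if_pos hc, if_neg (by omega), if_pos (by omega)]
    decide
  · rw [if_neg hc, if_neg hc]
    by_cases hd : k x + 1 + 1 = m x
    · rw [if_pos hd]
      split <;> decide
    · rw [if_neg hd]
      rcases Nat.mod_two_eq_zero_or_one (k x) with h | h
      · rw [if_neg (by omega), if_pos h]; decide
      · rw [if_pos (by omega), if_neg (by omega)]; decide

open SoficApprox in
/-- **The `Γ`-maps define a free action on `∂Y`.**
For every free ultrafilter `η` containing `Y`, the maps `σ̄(g)` are multiplicative at `η`
(`σ̄(g)(σ̄(h)(η)) = σ̄(gh)(η)`) and free at `η` (`σ̄(g)(η) ≠ η` for `g ≠ 1`). -/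
theorem permBar_mul_and_free_on_bdY
    {Γ : Type u} [Group Γ] {S : Finset Γ}
    (hSsymm : ∀ s ∈ S, s⁻¹ ∈ S)
    (hSgen : Subgroup.closure (S : Set Γ) = ⊤)
    (A : SoficApprox Γ S)
    (η : Ultrafilter A.Total)
    (hfree : ∀ p : A.Total, η ≠ pure p)
    (hY : A.Ytot ∈ η) :
    (∀ g h : Γ, A.permBar g (A.permBar h η) = A.permBar (g * h) η) ∧
    (∀ g : Γ, g ≠ 1 → A.permBar g η ≠ η) := by
  classical
  have htail : ∀ N : ℕ, {p : A.Total | N ≤ p.1} ∈ η := by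
    intro N
    by_contra hcon
    have hc : {p : A.Total | N ≤ p.1}ᶜ ∈ η := Ultrafilter.compl_mem_iff_notMem.mpr hcon
    have hfin : ({p : A.Total | N ≤ p.1}ᶜ).Finite := by
      have hsub : {p : A.Total | N ≤ p.1}ᶜ ⊆ ⋃ i ∈ Finset.range N, Set.range (Sigma.mk i) := by
        rintro ⟨i, x⟩ hp
        simp only [Set.mem_compl_iff, Set.mem_setOf_eq, not_le] at hp
        exact Set.mem_biUnion (Finset.mem_range.mpr hp) ⟨x, rfl⟩
      refine Set.Finite.subset (Set.Finite.biUnion (Finset.range N).finite_toSet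
        (fun i _ => ?_)) hsub
      have := A.finX i
      exact Set.finite_range _
    obtain ⟨x, _, hxeq⟩ := Ultrafilter.eq_pure_of_finite_mem hfin hc
    exact hfree x hxeq
  have hFmem : ∀ g : Γ, ∃ N, ∀ i, N ≤ i → g ∈ A.F i := by
    intro g
    obtain ⟨N, hN⟩ := A.F_exhausts g
    exact ⟨N, fun i hi => A.F_mono hi hN⟩
  constructor
  · intro g h
    obtain ⟨N1, h1⟩ := hFmem g
    obtain ⟨N2, h2⟩ := hFmem h
    have hset : {p : A.Total | (A.perm g) ((A.perm h) p) = (A.perm (g * h)) p} ∈ η := by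
      refine Filter.mem_of_superset (Filter.inter_mem hY (htail (max N1 N2))) ?_
      rintro ⟨i, x⟩ ⟨hxY, hiN⟩
      simp only [Set.mem_setOf_eq] at hiN ⊢
      show (⟨i, A.sigma i g (A.sigma i h x)⟩ : A.Total) = ⟨i, A.sigma i (g * h) x⟩
      rw [A.sigma_mul i g (h1 i (le_trans (le_max_left _ _) hiN))
        h (h2 i (le_trans (le_max_right _ _) hiN)) x hxY]
    apply Ultrafilter.coe_injective
    show Filter.map (A.perm g) (Filter.map (A.perm h) ↑η) = Filter.map (A.perm (g * h)) ↑η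
    rw [Filter.map_map]
    exact Filter.map_congr hset
  · intro g hg heq
    obtain ⟨N, hN⟩ := hFmem g
    have hcol : ∀ i : ℕ, ∃ c : A.X i → Fin 3,
        ∀ x, A.sigma i g x ≠ x → c (A.sigma i g x) ≠ c x := by
      intro i
      have := A.finX i
      exact exists_threeColoring (A.sigma i g)
    choose c hc using hcol
    let C : A.Total → Fin 3 := fun p => c p.1 p.2
    set B : Set A.Total := A.Ytot ∩ {p : A.Total | N ≤ p.1} with hBdef
    have hB : B ∈ η := Filter.inter_mem hY (htail N)
    have hBne : ∀ p ∈ B, A.sigma p.1 g p.2 ≠ p.2 := by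
      rintro ⟨i, x⟩ ⟨hxY, hiN⟩
      exact A.sigma_free i g (hN i hiN) hg x hxY
    have h3 : ∀ a : Fin 3, a = 0 ∨ a = 1 ∨ a = 2 := by decide
    have hunion : B ∩ C ⁻¹' {0} ∪ (B ∩ C ⁻¹' {1} ∪ B ∩ C ⁻¹' {2}) ∈ η := by
      refine Filter.mem_of_superset hB ?_
      intro p hp
      rcases h3 (C p) with h | h | h
      · exact Or.inl ⟨hp, h⟩
      · exact Or.inr (Or.inl ⟨hp, h⟩)
      · exact Or.inr (Or.inr ⟨hp, h⟩)
    have hex : ∃ j : Fin 3, B ∩ C ⁻¹' {j} ∈ η := by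
      rcases Ultrafilter.union_mem_iff.mp hunion with h | h
      · exact ⟨0, h⟩
      · rcases Ultrafilter.union_mem_iff.mp h with h | h
        · exact ⟨1, h⟩
        · exact ⟨2, h⟩
    obtain ⟨j, hj⟩ := hex
    have hj' : (A.perm g) ⁻¹' (B ∩ C ⁻¹' {j}) ∈ η := by
      have : B ∩ C ⁻¹' {j} ∈ A.permBar g η := by rw [heq]; exact hj
      exact Ultrafilter.mem_map.mp this
    obtain ⟨p, hp1, hp2⟩ := Ultrafilter.nonempty_of_mem (Filter.inter_mem hj hj')
    obtain ⟨i, x⟩ := p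
    have hc1 : c i x = j := hp1.2
    have hc2 : c i (A.sigma i g x) = j := hp2.2
    exact hc i x (hBne ⟨i, x⟩ hp1.1) (hc2.trans hc1.symm)
end

section
/- The core Z := ⋂_{g ∈ Γ} σ̄(g)''(∂Y) is a nonempty closed subset of Ultrafilter X contained in ∂Y, and it is invariant under the Γ-maps: σ̄(g)''(Z) = Z for every g ∈ Γ. -/
open scoped BigOperators symmDiff Classical

universe u v

namespace SoficApprox

variable {Γ : Type u} [Group Γ] {S : Finset Γ} (A : SoficApprox Γ S)

lemma perm_mk (g : Γ) (i : ℕ) (x : A.X i) :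
    A.perm g ⟨i, x⟩ = ⟨i, A.sigma i g x⟩ := rfl

lemma sigma_one_fix (i : ℕ) {y : A.X i} (hy : y ∈ A.Y i) : A.sigma i 1 y = y := by
  have h := A.sigma_mul i 1 (A.F_one i) 1 (A.F_one i) y hy
  rw [one_mul] at h
  exact (A.sigma i 1).injective h

lemma exists_mul_index (g h : Γ) :
    ∃ i₀ : ℕ, ∀ i, i₀ ≤ i → ∀ y ∈ A.Y i,
      A.sigma i g (A.sigma i h y) = A.sigma i (g * h) y := by
  obtain ⟨a, ha⟩ := A.F_exhausts g
  obtain ⟨b, hb⟩ := A.F_exhausts h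
  exact ⟨max a b, fun i hi y hy =>
    A.sigma_mul i g (A.F_mono (le_trans (le_max_left a b) hi) ha) h
      (A.F_mono (le_trans (le_max_right a b) hi) hb) y hy⟩

lemma finite_lt (n : ℕ) : {p : A.Total | p.1 < n}.Finite := by
  have hsub : {p : A.Total | p.1 < n} ⊆ ⋃ i ∈ Finset.range n, Sigma.mk i '' Set.univ := by
    rintro ⟨i, x⟩ hi
    exact Set.mem_biUnion (Finset.mem_range.2 hi) ⟨x, Set.mem_univ x, rfl⟩
  refine Set.Finite.subset (Set.Finite.biUnion (Finset.range n).finite_toSet fun i _ => ?_) hsub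
  have := A.finX i
  exact Set.finite_univ.image _

lemma tail_mem_of_free {η : Ultrafilter A.Total} (hfree : ∀ p, η ≠ pure p) (n : ℕ) :
    {p : A.Total | n ≤ p.1} ∈ η := by
  rcases η.le_cofinite_or_eq_pure with h | ⟨a, ha⟩
  · have h1 : {p : A.Total | p.1 < n}ᶜ ∈ η := h (A.finite_lt n).compl_mem_cofinite
    exact Filter.mem_of_superset h1 fun p hp => not_lt.1 (by simpa using hp)
  · exact absurd ha (hfree a)

lemma free_map (g : Γ) {η : Ultrafilter A.Total} (hfree : ∀ p, η ≠ pure p) :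
    ∀ p, Ultrafilter.map (A.perm g) η ≠ pure p := by
  intro p hp
  have h1 : {p} ∈ Ultrafilter.map (A.perm g) η := by
    rw [hp]; exact Ultrafilter.mem_pure.2 rfl
  have h2 : A.perm g ⁻¹' {p} ∈ η := Ultrafilter.mem_map.1 h1
  have h3 : A.perm g ⁻¹' {p} = {(A.perm g).symm p} := by
    ext x
    simp [Equiv.eq_symm_apply, eq_comm]
  rw [h3] at h2
  obtain ⟨x, -, hx⟩ := Ultrafilter.eq_pure_of_finite_mem (Set.finite_singleton _) h2
  exact hfree x hx

lemma map_one_eq {η : Ultrafilter A.Total} (hY : A.Ytot ∈ η) : A.permBar 1 η = η := by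
  apply Ultrafilter.coe_injective
  simp only [permBar, Ultrafilter.coe_map]
  have : Filter.map (A.perm 1) ↑η = Filter.map id ↑η := by
    refine Filter.map_congr (Filter.eventuallyEq_of_mem hY ?_)
    rintro ⟨i, x⟩ hx
    exact congrArg (Sigma.mk i) (A.sigma_one_fix i hx)
  rw [this, Filter.map_id]

lemma map_comp_eq {η : Ultrafilter A.Total} (hfree : ∀ p, η ≠ pure p) (hY : A.Ytot ∈ η)
    (g h : Γ) : A.permBar g (A.permBar h η) = A.permBar (g * h) η := by
  obtain ⟨i₀, hi₀⟩ := A.exists_mul_index g h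
  have hE : A.Ytot ∩ {p : A.Total | i₀ ≤ p.1} ∈ η :=
    Filter.inter_mem hY (A.tail_mem_of_free hfree i₀)
  apply Ultrafilter.coe_injective
  simp only [permBar, Ultrafilter.coe_map, Filter.map_map]
  refine Filter.map_congr (Filter.eventuallyEq_of_mem hE ?_)
  rintro ⟨i, x⟩ ⟨hx, hi⟩
  show (⟨i, A.sigma i g (A.sigma i h x)⟩ : A.Total) = ⟨i, A.sigma i (g * h) x⟩
  rw [hi₀ i hi x hx]

end SoficApprox

namespace SoficApprox

variable {Γ : Type u} [Group Γ] {S : Finset Γ} (A : SoficApprox Γ S)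

lemma inter_counting (i : ℕ) (T : Finset Γ) :
    (1 - ((T.card : ℝ) + 1) * A.eps i) * (Nat.card (A.X i) : ℝ)
      ≤ ((A.Y i ∩ ⋂ g ∈ T, A.sigma i g ⁻¹' A.Y i).ncard : ℝ) := by
  classical
  have hfin := A.finX i
  induction T using Finset.induction with
  | empty =>
      simp only [Finset.card_empty, Nat.cast_zero, zero_add, one_mul,
        Finset.notMem_empty, Set.iInter_of_empty, Set.iInter_univ, Set.inter_univ]
      exact A.Y_large i
  | insert _ _ hg ih =>
      rename_i g T
      rw [Finset.card_insert_of_notMem hg]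
      rw [Finset.set_biInter_insert, Set.inter_comm (A.sigma i g ⁻¹' A.Y i),
        ← Set.inter_assoc]
      set s1 := A.Y i ∩ ⋂ g' ∈ T, A.sigma i g' ⁻¹' A.Y i with hs1
      set s2 := A.sigma i g ⁻¹' A.Y i with hs2
      have hpre : s2.ncard = (A.Y i).ncard := by
        rw [hs2, ← Equiv.image_symm_eq_preimage]
        exact Set.ncard_image_of_injective _ (A.sigma i g).symm.injective
      have h2 : (1 - A.eps i) * (Nat.card (A.X i) : ℝ) ≤ (s2.ncard : ℝ) := by
        rw [hpre]; exact A.Y_large i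
      have hiu : (s1 ∩ s2).ncard + (s1 ∪ s2).ncard = s1.ncard + s2.ncard :=
        Set.ncard_inter_add_ncard_union s1 s2 (Set.toFinite _) (Set.toFinite _)
      have hu : (s1 ∪ s2).ncard ≤ Nat.card (A.X i) := by
        rw [← Set.ncard_univ]
        exact Set.ncard_le_ncard (Set.subset_univ _) Set.finite_univ
      have hiu' : ((s1 ∩ s2).ncard : ℝ) + ((s1 ∪ s2).ncard : ℝ) = (s1.ncard : ℝ) + (s2.ncard : ℝ) := by
        exact_mod_cast congrArg (fun n : ℕ => (n : ℝ)) hiu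
      have hu' : ((s1 ∪ s2).ncard : ℝ) ≤ (Nat.card (A.X i) : ℝ) := by exact_mod_cast hu
      push_cast
      nlinarith [ih]
  
lemma C_nonempty (T : Finset Γ) (n : ℕ) :
    (A.Ytot ∩ {p : A.Total | n ≤ p.1} ∩ ⋂ g ∈ T, A.perm g ⁻¹' A.Ytot).Nonempty := by
  classical
  have hδ : (0 : ℝ) < 1 / ((T.card : ℝ) + 1) := by positivity
  have hev : ∀ᶠ i in Filter.atTop, A.eps i < 1 / ((T.card : ℝ) + 1) :=
    A.eps_lim.eventually (gt_mem_nhds hδ)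
  obtain ⟨i₁, hi₁⟩ := Filter.eventually_atTop.1 hev
  set i := max n i₁ with hidef
  have heps : A.eps i < 1 / ((T.card : ℝ) + 1) := hi₁ i (le_max_right _ _)
  have hfin := A.finX i
  have hne := A.neX i
  have hNpos : 0 < (Nat.card (A.X i) : ℝ) := by
    exact_mod_cast Nat.card_pos
  have hbig : (0 : ℝ) < (1 - ((T.card : ℝ) + 1) * A.eps i) * (Nat.card (A.X i) : ℝ) := by
    have hc : ((T.card : ℝ) + 1) * A.eps i < 1 := by
      have hcpos : (0:ℝ) < (T.card : ℝ) + 1 := by positivity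
      calc ((T.card : ℝ) + 1) * A.eps i < ((T.card : ℝ) + 1) * (1 / ((T.card : ℝ) + 1)) := by
            exact mul_lt_mul_of_pos_left heps hcpos
        _ = 1 := by field_simp
    nlinarith
  have hcount := A.inter_counting i T
  have hnz : (A.Y i ∩ ⋂ g ∈ T, A.sigma i g ⁻¹' A.Y i).ncard ≠ 0 := by
    intro h0
    rw [h0] at hcount
    norm_num at hcount
    linarith
  obtain ⟨x, hx⟩ := Set.nonempty_of_ncard_ne_zero hnz
  refine ⟨⟨i, x⟩, ⟨⟨hx.1, show n ≤ i from le_max_left _ _⟩, ?_⟩⟩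
  refine Set.mem_iInter₂.2 fun g hgT => ?_
  have hxg : A.sigma i g x ∈ A.Y i := Set.mem_iInter₂.1 hx.2 g hgT
  exact hxg

end SoficApprox

namespace SoficApprox

variable {Γ : Type u} [Group Γ] {S : Finset Γ} (A : SoficApprox Γ S)

lemma exists_core_point :
    ∃ η : Ultrafilter A.Total, (∀ p, η ≠ pure p) ∧ A.Ytot ∈ η ∧
      ∀ g : Γ, A.perm g ⁻¹' A.Ytot ∈ η := by
  classical
  set C : Finset Γ × ℕ → Set A.Total := fun q =>
    A.Ytot ∩ {p : A.Total | q.2 ≤ p.1} ∩ ⋂ g ∈ q.1, A.perm g ⁻¹' A.Ytot with hC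
  have hmono : ∀ q r : Finset Γ × ℕ, q.1 ⊆ r.1 → q.2 ≤ r.2 → C r ⊆ C q := by
    rintro q r h1 h2 p ⟨⟨hp1, hp2⟩, hp3⟩
    exact ⟨⟨hp1, le_trans h2 hp2⟩,
      Set.mem_iInter₂.2 fun g hg => Set.mem_iInter₂.1 hp3 g (h1 hg)⟩
  have hne : ∀ q, (C q).Nonempty := fun q => A.C_nonempty q.1 q.2
  have hdir : Directed (· ≥ ·) fun q => Filter.principal (C q) := by
    intro q r
    refine ⟨⟨q.1 ∪ r.1, max q.2 r.2⟩, ?_, ?_⟩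
    · exact Filter.principal_mono.2
        (hmono q _ Finset.subset_union_left (le_max_left _ _))
    · exact Filter.principal_mono.2
        (hmono r _ Finset.subset_union_right (le_max_right _ _))
  have hTot : Nonempty A.Total := ⟨⟨0, (A.neX 0).some⟩⟩
  have hNB : Filter.NeBot (⨅ q, Filter.principal (C q)) :=
    Filter.iInf_neBot_of_directed hdir fun q => Filter.principal_neBot_iff.2 (hne q)
  set η := Ultrafilter.of (⨅ q, Filter.principal (C q)) with hη
  have hCmem : ∀ q, C q ∈ η := by
    intro q
    exact Ultrafilter.of_le _
      (iInf_le (fun q => Filter.principal (C q)) q (Filter.mem_principal_self _))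
  have hYmem : A.Ytot ∈ η :=
    Filter.mem_of_superset (hCmem (∅, 0)) fun p hp => hp.1.1
  have htail : ∀ n : ℕ, {p : A.Total | n ≤ p.1} ∈ η := fun n =>
    Filter.mem_of_superset (hCmem (∅, n)) fun p hp => hp.1.2
  refine ⟨η, ?_, hYmem, ?_⟩
  · intro p hp
    have := htail (p.1 + 1)
    rw [hp] at this
    exact Nat.not_succ_le_self p.1 (Ultrafilter.mem_pure.1 this)
  · intro g
    refine Filter.mem_of_superset (hCmem ({g}, 0)) fun p hp => ?_
    exact Set.mem_iInter₂.1 hp.2 g (Finset.mem_singleton_self g)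

lemma pure_singleton_open (p : A.Total) :
    IsOpen {η : Ultrafilter A.Total | η = pure p} := by
  have : {η : Ultrafilter A.Total | η = pure p} = {η : Ultrafilter A.Total | {p} ∈ η} := by
    ext η
    constructor
    · rintro rfl; exact Ultrafilter.mem_pure.2 rfl
    · intro h
      obtain ⟨x, hx, hη⟩ := Ultrafilter.eq_pure_of_finite_mem (Set.finite_singleton p) h
      rwa [Set.mem_singleton_iff.1 hx] at hη
  rw [this]
  exact ultrafilter_isOpen_basic _

lemma bdY_closed : IsClosed A.bdY := by
  have : A.bdY = {η : Ultrafilter A.Total | A.Ytot ∈ η} ∩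
      ⋂ p : A.Total, {η : Ultrafilter A.Total | η = pure p}ᶜ := by
    ext η
    simp only [bdY, Set.mem_inter_iff, Set.mem_iInter, Set.mem_setOf_eq, Set.mem_compl_iff]
    tauto
  rw [this]
  exact (ultrafilter_isClosed_basic _).inter
    (isClosed_iInter fun p => (A.pure_singleton_open p).isClosed_compl)

lemma permBar_continuous (g : Γ) : Continuous (A.permBar g) := by
  refine (ultrafilterBasis_is_basis (α := A.Total)).continuous_iff.2 ?_
  rintro _ ⟨s, rfl⟩
  have : A.permBar g ⁻¹' {η : Ultrafilter A.Total | s ∈ η}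
      = {η : Ultrafilter A.Total | A.perm g ⁻¹' s ∈ η} := by
    ext η
    exact Ultrafilter.mem_map
  rw [this]
  exact ultrafilter_isOpen_basic _

end SoficApprox

namespace SoficApprox

variable {Γ : Type u} [Group Γ] {S : Finset Γ} (A : SoficApprox Γ S)

lemma mem_permBar {s : Set A.Total} {η : Ultrafilter A.Total} (g : Γ) :
    s ∈ A.permBar g η ↔ A.perm g ⁻¹' s ∈ η :=
  Ultrafilter.mem_map

end SoficApprox

open SoficApprox in
/-- **Basic properties of the core.**
The core `Z = ⋂_{g ∈ Γ} σ̄(g)''(∂Y)` is a nonempty closed subset of `βX` contained in `∂Y`,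
invariant under every `σ̄(g)`: `σ̄(g)''(Z) = Z`. -/
theorem core_nonempty_closed_invariant
    {Γ : Type u} [Group Γ] {S : Finset Γ}
    (hSsymm : ∀ s ∈ S, s⁻¹ ∈ S)
    (hSgen : Subgroup.closure (S : Set Γ) = ⊤)
    (A : SoficApprox Γ S) :
    A.core.Nonempty ∧ IsClosed A.core ∧ A.core ⊆ A.bdY ∧
      ∀ g : Γ, A.permBar g '' A.core = A.core := by
  have hsub : A.core ⊆ A.bdY := by
    intro η hη
    obtain ⟨ζ, hζ, hmap⟩ := Set.mem_iInter.1 hη 1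
    have h1 : A.permBar 1 ζ = ζ := A.map_one_eq hζ.2
    rw [← hmap, h1]
    exact hζ
  refine ⟨?_, ?_, hsub, ?_⟩
  · obtain ⟨η, hfree, hY, hpre⟩ := A.exists_core_point
    refine ⟨η, Set.mem_iInter.2 fun g => ?_⟩
    refine ⟨A.permBar g⁻¹ η, ⟨A.free_map g⁻¹ hfree, (A.mem_permBar g⁻¹).2 (hpre g⁻¹)⟩, ?_⟩
    calc A.permBar g (A.permBar g⁻¹ η) = A.permBar (g * g⁻¹) η :=
          A.map_comp_eq hfree hY g g⁻¹
      _ = A.permBar 1 η := by rw [mul_inv_cancel]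
      _ = η := A.map_one_eq hY
  · exact isClosed_iInter fun g =>
      ((A.bdY_closed.isCompact).image (A.permBar_continuous g)).isClosed
  · intro g
    apply Set.Subset.antisymm
    · rintro _ ⟨ζ, hζ, rfl⟩
      refine Set.mem_iInter.2 fun h => ?_
      obtain ⟨ξ, hξ, hmap⟩ := Set.mem_iInter.1 hζ (g⁻¹ * h)
      refine ⟨ξ, hξ, ?_⟩
      rw [← hmap, A.map_comp_eq hξ.1 hξ.2, mul_inv_cancel_left]
    · intro ζ hζ
      have hbd := hsub hζ
      refine ⟨A.permBar g⁻¹ ζ, ?_, ?_⟩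
      · refine Set.mem_iInter.2 fun h => ?_
        obtain ⟨ξ, hξ, hmap⟩ := Set.mem_iInter.1 hζ (g * h)
        refine ⟨ξ, hξ, ?_⟩
        rw [← hmap, A.map_comp_eq hξ.1 hξ.2, inv_mul_cancel_left]
      · rw [A.map_comp_eq hbd.1 hbd.2, mul_inv_cancel]
        exact A.map_one_eq hbd.2
end

section
/- Fix a free ultrafilter ω on ℕ. There exists a Borel probability measure μ on the compact Hausdorff space Ultrafilter X such that: (a) for every subset A ⊆ X, the sequence i ↦ |A ∩ X_i| / |X_i| converges along ω to μ({η ∈ Ultrafilter X : A ∈ η}); (b) μ is invariant under σ̄(g) for every g ∈ Γ, i.e. the pushforward of μ under σ̄(g) equals μ; and (c) μ(Z) = 1, where Z := ⋂_{g ∈ Γ} σ̄(g)''(∂Y) is the core; in particular the set of free ultrafilters has μ-measure 1 and μ(∂Y) = 1. -/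
open scoped BigOperators symmDiff Classical

universe u v

noncomputable instance (α : Type v) : MeasurableSpace (Ultrafilter α) := borel _

instance (α : Type v) : BorelSpace (Ultrafilter α) := ⟨rfl⟩

section AuxiliaryForSoficBoundary

open MeasureTheory Filter Set Topology
open scoped NNReal ENNReal

lemma ultra_le_cofinite {α : Type v} (ω : Ultrafilter α) (hω : ∀ n : α, ω ≠ pure n) :
    (↑ω : Filter α) ≤ Filter.cofinite :=
  ω.le_cofinite_or_eq_pure.resolve_right (by rintro ⟨a, ha⟩; exact hω a ha)

lemma inter_meas_one {α : Type v} [MeasurableSpace α] {μ : Measure α} [IsProbabilityMeasure μ]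
    {s t : Set α} (hs : MeasurableSet s) (ht : MeasurableSet t)
    (h1 : μ s = 1) (h2 : μ t = 1) : μ (s ∩ t) = 1 := by
  rw [← prob_compl_eq_zero_iff (hs.inter ht), Set.compl_inter]
  exact measure_union_null ((prob_compl_eq_zero_iff hs).mpr h1)
    ((prob_compl_eq_zero_iff ht).mpr h2)

lemma countable_of_symm_gen {Γ : Type u} [Group Γ] {S : Finset Γ}
    (hSsymm : ∀ s ∈ S, s⁻¹ ∈ S) (hSgen : Subgroup.closure (S : Set Γ) = ⊤) :
    Countable Γ := by
  have hsurj : Function.Surjective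
      (fun l : List {x : Γ // x ∈ S} => (l.map Subtype.val).prod) := by
    intro g
    have hg : g ∈ Subgroup.closure (S : Set Γ) := by rw [hSgen]; trivial
    refine Subgroup.closure_induction ?_ ?_ ?_ ?_ hg
    · intro x hx; exact ⟨[⟨x, hx⟩], by simp⟩
    · exact ⟨[], by simp⟩
    · rintro x y hx hy ⟨l, rfl⟩ ⟨m, rfl⟩; exact ⟨l ++ m, by simp⟩
    · rintro x hx ⟨l, rfl⟩
      refine ⟨(l.map (fun (a : {x : Γ // x ∈ S}) => (⟨a.1⁻¹, hSsymm _ a.2⟩ : {x : Γ // x ∈ S}))).reverse, ?_⟩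
      show (List.map Subtype.val ((l.map _).reverse)).prod = _
      rw [List.map_reverse, List.map_map, List.prod_inv_reverse (l.map Subtype.val),
        List.map_map]
      rfl
  exact hsurj.countable

namespace SoficApprox

variable {Γ : Type u} [Group Γ] {S : Finset Γ} (A : SoficApprox Γ S)

lemma total_countable : Countable A.Total := by
  haveI : ∀ i, Finite (A.X i) := A.finX
  infer_instance

/-- Basic clopen subset of `βX`. -/
def Cl (B : Set A.Total) : Set (Ultrafilter A.Total) := {η | B ∈ η}

lemma isOpen_Cl (B : Set A.Total) : IsOpen (A.Cl B) := ultrafilter_isOpen_basic B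

lemma isClosed_Cl (B : Set A.Total) : IsClosed (A.Cl B) := ultrafilter_isClosed_basic B

lemma isCompact_Cl (B : Set A.Total) : IsCompact (A.Cl B) := (A.isClosed_Cl B).isCompact

lemma measurableSet_Cl (B : Set A.Total) : MeasurableSet (A.Cl B) :=
  (A.isOpen_Cl B).measurableSet

lemma Cl_mono {B C : Set A.Total} (h : B ⊆ C) : A.Cl B ⊆ A.Cl C :=
  fun _ hη => Filter.mem_of_superset hη h

lemma Cl_univ : A.Cl Set.univ = Set.univ := Set.eq_univ_of_forall fun _ => Filter.univ_mem

lemma Cl_compl (B : Set A.Total) : A.Cl Bᶜ = (A.Cl B)ᶜ := by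
  ext η; exact Ultrafilter.compl_mem_iff_notMem

lemma Cl_inter (B C : Set A.Total) : A.Cl (B ∩ C) = A.Cl B ∩ A.Cl C := by
  ext η; exact Filter.inter_mem_iff

lemma subset_of_Cl_subset {B C : Set A.Total} (h : A.Cl B ⊆ A.Cl C) : B ⊆ C := by
  intro p hp
  have h1 : (pure p : Ultrafilter A.Total) ∈ A.Cl B := Ultrafilter.mem_pure.mpr hp
  have h2 : C ∈ (pure p : Ultrafilter A.Total) := h h1
  exact Ultrafilter.mem_pure.mp h2

/-- The proportion of `B` inside `X i`. -/
noncomputable def seqB (B : Set A.Total) (i : ℕ) : ℝ≥0 :=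
  (({x : A.X i | (⟨i, x⟩ : A.Total) ∈ B}).ncard : ℝ≥0) / (Nat.card (A.X i) : ℝ≥0)

lemma cardX_pos (i : ℕ) : 0 < Nat.card (A.X i) := by
  haveI := A.finX i; haveI := A.neX i; exact Nat.card_pos

lemma seqB_le_one (B : Set A.Total) (i : ℕ) : A.seqB B i ≤ 1 := by
  haveI := A.finX i
  rw [seqB, div_le_one (by exact_mod_cast A.cardX_pos i)]
  exact_mod_cast (Set.ncard_le_ncard (Set.subset_univ _) Set.finite_univ).trans_eq
    (Set.ncard_univ _)

lemma seqB_coe (B : Set A.Total) (i : ℕ) : ((A.seqB B i : ℝ)) =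
    (({x : A.X i | (⟨i, x⟩ : A.Total) ∈ B}).ncard : ℝ) / (Nat.card (A.X i) : ℝ) := by
  rw [seqB, NNReal.coe_div]; norm_cast

lemma seqB_mono {B C : Set A.Total} (h : B ⊆ C) (i : ℕ) : A.seqB B i ≤ A.seqB C i := by
  haveI := A.finX i
  rw [seqB, seqB, div_eq_mul_inv, div_eq_mul_inv]
  refine mul_le_mul_left ?_ _
  have hsub : {x : A.X i | (⟨i, x⟩ : A.Total) ∈ B} ⊆ {x : A.X i | (⟨i, x⟩ : A.Total) ∈ C} :=
    fun x hx => h hx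
  exact_mod_cast Set.ncard_le_ncard hsub (Set.toFinite _)

lemma seqB_union_le (B C : Set A.Total) (i : ℕ) :
    A.seqB (B ∪ C) i ≤ A.seqB B i + A.seqB C i := by
  haveI := A.finX i
  rw [seqB, seqB, seqB, ← add_div, div_eq_mul_inv, div_eq_mul_inv]
  refine mul_le_mul_left ?_ _
  have : {x : A.X i | (⟨i, x⟩ : A.Total) ∈ B ∪ C} =
      {x : A.X i | (⟨i, x⟩ : A.Total) ∈ B} ∪ {x : A.X i | (⟨i, x⟩ : A.Total) ∈ C} := rfl
  rw [this]
  exact_mod_cast Set.ncard_union_le _ _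

lemma seqB_union_eq {B C : Set A.Total} (h : Disjoint B C) (i : ℕ) :
    A.seqB (B ∪ C) i = A.seqB B i + A.seqB C i := by
  haveI := A.finX i
  have hset : {x : A.X i | (⟨i, x⟩ : A.Total) ∈ B ∪ C} =
      {x : A.X i | (⟨i, x⟩ : A.Total) ∈ B} ∪ {x : A.X i | (⟨i, x⟩ : A.Total) ∈ C} := rfl
  have hdis : Disjoint {x : A.X i | (⟨i, x⟩ : A.Total) ∈ B}
      {x : A.X i | (⟨i, x⟩ : A.Total) ∈ C} := by
    rw [Set.disjoint_left]
    exact fun x hxB hxC => Set.disjoint_left.mp h hxB hxC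
  rw [seqB, hset, Set.ncard_union_eq hdis, seqB, seqB, ← add_div]
  norm_cast

lemma seqB_univ (i : ℕ) : A.seqB Set.univ i = 1 := by
  haveI := A.finX i
  have : {x : A.X i | (⟨i, x⟩ : A.Total) ∈ (Set.univ : Set A.Total)} = Set.univ :=
    Set.eq_univ_of_forall fun _ => trivial
  rw [seqB, this, Set.ncard_univ]
  exact div_self (by exact_mod_cast (A.cardX_pos i).ne')

lemma exists_mval (ω : Ultrafilter ℕ) (B : Set A.Total) :
    ∃ c : ℝ≥0, c ≤ 1 ∧ Filter.Tendsto (A.seqB B) ↑ω (nhds c) := by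
  obtain ⟨c, hc, hconv⟩ := (isCompact_Icc (a := (0 : ℝ≥0)) (b := 1)).ultrafilter_le_nhds
    (ω.map (A.seqB B)) (by
      rw [Ultrafilter.coe_map, Filter.le_principal_iff]
      exact Filter.mem_map.mpr (Filter.univ_mem'
        fun i => ⟨zero_le, A.seqB_le_one B i⟩))
  rw [Ultrafilter.coe_map] at hconv
  exact ⟨c, hc.2, hconv⟩

/-- The `ω`-limit of the proportions of `B`. -/
noncomputable def mval (ω : Ultrafilter ℕ) (B : Set A.Total) : ℝ≥0 :=
  (A.exists_mval ω B).choose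

lemma mval_le_one (ω : Ultrafilter ℕ) (B : Set A.Total) : A.mval ω B ≤ 1 :=
  (A.exists_mval ω B).choose_spec.1

lemma mval_tendsto (ω : Ultrafilter ℕ) (B : Set A.Total) :
    Filter.Tendsto (A.seqB B) ↑ω (nhds (A.mval ω B)) :=
  (A.exists_mval ω B).choose_spec.2

lemma mval_eq_of_tendsto (ω : Ultrafilter ℕ) {B : Set A.Total} {c : ℝ≥0}
    (h : Filter.Tendsto (A.seqB B) ↑ω (nhds c)) : A.mval ω B = c :=
  tendsto_nhds_unique (A.mval_tendsto ω B) h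

lemma mval_mono (ω : Ultrafilter ℕ) {B C : Set A.Total} (h : B ⊆ C) :
    A.mval ω B ≤ A.mval ω C :=
  le_of_tendsto_of_tendsto' (A.mval_tendsto ω B) (A.mval_tendsto ω C) (A.seqB_mono h)

lemma mval_union_le (ω : Ultrafilter ℕ) (B C : Set A.Total) :
    A.mval ω (B ∪ C) ≤ A.mval ω B + A.mval ω C :=
  le_of_tendsto_of_tendsto' (A.mval_tendsto ω (B ∪ C))
    ((A.mval_tendsto ω B).add (A.mval_tendsto ω C)) (A.seqB_union_le B C)

lemma mval_union_eq (ω : Ultrafilter ℕ) {B C : Set A.Total} (h : Disjoint B C) :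
    A.mval ω (B ∪ C) = A.mval ω B + A.mval ω C :=
  A.mval_eq_of_tendsto ω (by
    refine Filter.Tendsto.congr (fun i => (A.seqB_union_eq h i).symm) ?_
    exact (A.mval_tendsto ω B).add (A.mval_tendsto ω C))

lemma mval_univ (ω : Ultrafilter ℕ) : A.mval ω Set.univ = 1 :=
  A.mval_eq_of_tendsto ω (by
    refine Filter.Tendsto.congr (fun i => (A.seqB_univ i).symm) tendsto_const_nhds)

lemma mval_singleton (ω : Ultrafilter ℕ) (hω : ∀ n : ℕ, ω ≠ pure n) (p : A.Total) :
    A.mval ω {p} = 0 := by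
  have hcof := ultra_le_cofinite ω hω
  have hev : ∀ᶠ i in (↑ω : Filter ℕ), A.seqB {p} i = 0 := by
    refine ((Set.finite_singleton p.1).eventually_cofinite_notMem.filter_mono hcof).mono ?_
    intro i hi
    have hempty : {x : A.X i | (⟨i, x⟩ : A.Total) ∈ ({p} : Set A.Total)} = ∅ := by
      ext x
      simp only [Set.mem_setOf_eq, Set.mem_singleton_iff, Set.mem_empty_iff_false, iff_false]
      intro h
      exact hi (congrArg Sigma.fst h)
    rw [seqB, hempty, Set.ncard_empty]
    simp
  exact A.mval_eq_of_tendsto ω (Filter.Tendsto.congr' (by filter_upwards [hev] with i h using h.symm)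
    tendsto_const_nhds)

lemma mval_Ytot (ω : Ultrafilter ℕ) (hω : ∀ n : ℕ, ω ≠ pure n) : A.mval ω A.Ytot = 1 := by
  have hcof := ultra_le_cofinite ω hω
  have hatTop : (↑ω : Filter ℕ) ≤ Filter.atTop := by
    rw [← Nat.cofinite_eq_atTop]; exact hcof
  have htends : Filter.Tendsto (fun i => ((A.seqB A.Ytot i : ℝ))) ↑ω
      (nhds ((A.mval ω A.Ytot : ℝ))) := NNReal.tendsto_coe.mpr (A.mval_tendsto ω A.Ytot)
  have hub : (A.mval ω A.Ytot : ℝ) ≤ 1 := by exact_mod_cast A.mval_le_one ω A.Ytot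
  have hlb : (1 : ℝ) ≤ (A.mval ω A.Ytot : ℝ) := by
    have h1 : Filter.Tendsto (fun i => 1 - A.eps i) ↑ω (nhds 1) := by
      have h0 : Filter.Tendsto A.eps ↑ω (nhds 0) := A.eps_lim.mono_left hatTop
      simpa using tendsto_const_nhds.sub h0
    refine le_of_tendsto_of_tendsto' h1 htends fun i => ?_
    haveI := A.finX i
    have hc : (0 : ℝ) < (Nat.card (A.X i) : ℝ) := by exact_mod_cast A.cardX_pos i
    have hset : {x : A.X i | (⟨i, x⟩ : A.Total) ∈ A.Ytot} = A.Y i := rfl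
    rw [A.seqB_coe, hset, le_div_iff₀ hc]
    exact A.Y_large i
  have : (A.mval ω A.Ytot : ℝ) = 1 := le_antisymm hub hlb
  exact_mod_cast this

lemma mval_preimage (ω : Ultrafilter ℕ) (π : ∀ i, Equiv.Perm (A.X i)) (B : Set A.Total) :
    A.mval ω ((Equiv.sigmaCongrRight π) ⁻¹' B) = A.mval ω B := by
  refine A.mval_eq_of_tendsto ω ?_
  refine Filter.Tendsto.congr (fun i => ?_) (A.mval_tendsto ω B)
  haveI := A.finX i
  have hset : {x : A.X i | (⟨i, x⟩ : A.Total) ∈ (Equiv.sigmaCongrRight π) ⁻¹' B} =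
      (π i).symm '' {x : A.X i | (⟨i, x⟩ : A.Total) ∈ B} := by
    ext x
    simp only [Set.mem_setOf_eq, Set.mem_preimage, Equiv.sigmaCongrRight_apply]
    constructor
    · intro h; exact ⟨π i x, h, (π i).symm_apply_apply x⟩
    · rintro ⟨y, hy, rfl⟩
      simpa [(π i).apply_symm_apply y] using hy
  rw [seqB, seqB, hset, Set.ncard_image_of_injective _ (π i).symm.injective]

end SoficApprox

end AuxiliaryForSoficBoundary
section AuxiliaryForSoficBoundary2

open MeasureTheory Filter Set Topology TopologicalSpace
open scoped NNReal ENNReal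

namespace SoficApprox

variable {Γ : Type u} [Group Γ] {S : Finset Γ} (A : SoficApprox Γ S)

lemma exists_clopen_cover {K U : Set (Ultrafilter A.Total)} (hK : IsCompact K)
    (hU : IsOpen U) (hKU : K ⊆ U) : ∃ B : Set A.Total, K ⊆ A.Cl B ∧ A.Cl B ⊆ U := by
  have hpt : ∀ η ∈ K, ∃ B : Set A.Total, η ∈ A.Cl B ∧ A.Cl B ⊆ U := by
    intro η hη
    obtain ⟨t, ht, hηt, htU⟩ := ultrafilterBasis_is_basis.exists_subset_of_mem_open (hKU hη) hU
    obtain ⟨B, rfl⟩ := ht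
    exact ⟨B, hηt, htU⟩
  choose! B hB hBU using hpt
  have hcov : K ⊆ ⋃ η : K, A.Cl (B η) := fun η hη =>
    Set.mem_iUnion.mpr ⟨⟨η, hη⟩, hB η hη⟩
  obtain ⟨t, ht⟩ := hK.elim_finite_subcover (fun η : K => A.Cl (B η))
    (fun η => A.isOpen_Cl _) hcov
  refine ⟨⋃ η ∈ t, B (η : Ultrafilter A.Total), ?_, ?_⟩
  · intro ξ hξ
    have hmem := ht hξ
    rw [Set.mem_iUnion₂] at hmem
    obtain ⟨i, hit, hmem⟩ := hmem
    exact Filter.mem_of_superset hmem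
      (Set.subset_biUnion_of_mem (u := fun η : K => B (η : Ultrafilter A.Total)) hit)
  · intro ξ hξ
    rw [← Finset.set_biUnion_coe] at hξ
    have : ∃ η ∈ (t : Set K), B (η : Ultrafilter A.Total) ∈ ξ :=
      (Ultrafilter.finite_biUnion_mem_iff t.finite_toSet).mp hξ
    obtain ⟨η, _, hmem⟩ := this
    exact hBU η η.2 hmem

lemma exists_clopen_sep {K L : Set (Ultrafilter A.Total)} (hK : IsCompact K)
    (hL : IsCompact L) (h : Disjoint K L) :
    ∃ B : Set A.Total, K ⊆ A.Cl B ∧ L ⊆ A.Cl Bᶜ := by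
  obtain ⟨B, h1, h2⟩ := A.exists_clopen_cover hK hL.isClosed.isOpen_compl
    (fun x hx hxL => Set.disjoint_left.mp h hx hxL)
  refine ⟨B, h1, ?_⟩
  rw [Cl_compl]
  exact fun η hη hmem => h2 hmem hη

/-- The value of the content on an arbitrary subset of `βX`. -/
noncomputable def lam (ω : Ultrafilter ℕ) (K : Set (Ultrafilter A.Total)) : ℝ≥0∞ :=
  ⨅ B : {B : Set A.Total // K ⊆ A.Cl B}, ((A.mval ω B : ℝ≥0) : ℝ≥0∞)

lemma coverNonempty (K : Set (Ultrafilter A.Total)) :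
    Nonempty {B : Set A.Total // K ⊆ A.Cl B} :=
  ⟨⟨Set.univ, by rw [A.Cl_univ]; exact Set.subset_univ K⟩⟩

lemma lam_le (ω : Ultrafilter ℕ) {K : Set (Ultrafilter A.Total)} {B : Set A.Total}
    (h : K ⊆ A.Cl B) : A.lam ω K ≤ (A.mval ω B : ℝ≥0∞) :=
  iInf_le (fun B : {B : Set A.Total // K ⊆ A.Cl B} =>
    ((A.mval ω B.1 : ℝ≥0) : ℝ≥0∞)) ⟨B, h⟩

lemma le_lam (ω : Ultrafilter ℕ) {K : Set (Ultrafilter A.Total)} {c : ℝ≥0∞}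
    (h : ∀ B : Set A.Total, K ⊆ A.Cl B → c ≤ (A.mval ω B : ℝ≥0∞)) : c ≤ A.lam ω K := by
  unfold lam
  exact le_iInf fun B => h B.1 B.2

lemma lam_le_one (ω : Ultrafilter ℕ) (K : Set (Ultrafilter A.Total)) : A.lam ω K ≤ 1 := by
  refine (A.lam_le ω (B := Set.univ) ?_).trans ?_
  · rw [A.Cl_univ]; exact Set.subset_univ K
  · rw [A.mval_univ]; simp

lemma lam_ne_top (ω : Ultrafilter ℕ) (K : Set (Ultrafilter A.Total)) : A.lam ω K ≠ ⊤ :=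
  ((A.lam_le_one ω K).trans_lt (by norm_num)).ne

lemma lam_mono (ω : Ultrafilter ℕ) {K L : Set (Ultrafilter A.Total)} (h : K ⊆ L) :
    A.lam ω K ≤ A.lam ω L :=
  A.le_lam ω fun B hB => A.lam_le ω (h.trans hB)

lemma lam_Cl (ω : Ultrafilter ℕ) (B : Set A.Total) :
    A.lam ω (A.Cl B) = (A.mval ω B : ℝ≥0∞) := by
  refine le_antisymm (A.lam_le ω subset_rfl) (A.le_lam ω fun C hC => ?_)
  exact_mod_cast A.mval_mono ω (A.subset_of_Cl_subset hC)

lemma lam_union_le (ω : Ultrafilter ℕ) (K L : Set (Ultrafilter A.Total)) :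
    A.lam ω (K ∪ L) ≤ A.lam ω K + A.lam ω L := by
  haveI := A.coverNonempty K
  haveI := A.coverNonempty L
  have hrw : A.lam ω K + A.lam ω L = ⨅ B : {B : Set A.Total // K ⊆ A.Cl B},
      ⨅ C : {C : Set A.Total // L ⊆ A.Cl C},
      (((A.mval ω B.1 : ℝ≥0) : ℝ≥0∞) + ((A.mval ω C.1 : ℝ≥0) : ℝ≥0∞)) := by
    unfold lam
    rw [ENNReal.iInf_add]
    exact iInf_congr fun B => ENNReal.add_iInf
  rw [hrw]
  refine le_iInf fun B => le_iInf fun C => ?_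
  refine le_trans (A.lam_le ω (B := B.1 ∪ C.1) ?_) ?_
  · exact Set.union_subset (B.2.trans (A.Cl_mono Set.subset_union_left))
      (C.2.trans (A.Cl_mono Set.subset_union_right))
  · calc ((A.mval ω (B.1 ∪ C.1) : ℝ≥0) : ℝ≥0∞)
        ≤ ((A.mval ω B.1 + A.mval ω C.1 : ℝ≥0) : ℝ≥0∞) := by
          exact_mod_cast A.mval_union_le ω B.1 C.1
      _ = _ := by rw [ENNReal.coe_add]

lemma lam_union_eq (ω : Ultrafilter ℕ) {K L : Set (Ultrafilter A.Total)}
    (hK : IsCompact K) (hL : IsCompact L) (h : Disjoint K L) :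
    A.lam ω (K ∪ L) = A.lam ω K + A.lam ω L := by
  refine le_antisymm (A.lam_union_le ω K L) ?_
  obtain ⟨B, hKB, hLB⟩ := A.exists_clopen_sep hK hL h
  refine A.le_lam ω fun C hC => ?_
  have hKC : K ⊆ A.Cl (C ∩ B) := by
    rw [A.Cl_inter]
    exact Set.subset_inter ((Set.subset_union_left).trans hC) hKB
  have hLC : L ⊆ A.Cl (C ∩ Bᶜ) := by
    rw [A.Cl_inter]
    exact Set.subset_inter ((Set.subset_union_right).trans hC) hLB
  have hsum : A.mval ω (C ∩ B) + A.mval ω (C ∩ Bᶜ) = A.mval ω C := by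
    rw [← A.mval_union_eq ω (Set.disjoint_of_subset Set.inter_subset_right
      Set.inter_subset_right disjoint_compl_right), Set.inter_union_compl]
  calc A.lam ω K + A.lam ω L
      ≤ (A.mval ω (C ∩ B) : ℝ≥0∞) + (A.mval ω (C ∩ Bᶜ) : ℝ≥0∞) :=
        add_le_add (A.lam_le ω hKC) (A.lam_le ω hLC)
    _ = (A.mval ω C : ℝ≥0∞) := by rw [← ENNReal.coe_add, hsum]

end SoficApprox

end AuxiliaryForSoficBoundary2
section AuxiliaryForSoficBoundary3

open MeasureTheory Filter Set Topology TopologicalSpace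
open scoped NNReal ENNReal

namespace SoficApprox

variable {Γ : Type u} [Group Γ] {S : Finset Γ} (A : SoficApprox Γ S)

/-- The content on `βX` induced by the `ω`-limit of normalised counting measures. -/
noncomputable def cont (ω : Ultrafilter ℕ) : Content (Ultrafilter A.Total) where
  toFun K := (A.lam ω (K : Set (Ultrafilter A.Total))).toNNReal
  mono' K₁ K₂ h := ENNReal.toNNReal_mono (A.lam_ne_top ω _) (A.lam_mono ω h)
  sup_disjoint' K₁ K₂ hd _ _ := by
    show (A.lam ω ((K₁ ⊔ K₂ : Compacts (Ultrafilter A.Total)) :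
        Set (Ultrafilter A.Total))).toNNReal =
      (A.lam ω (K₁ : Set (Ultrafilter A.Total))).toNNReal +
      (A.lam ω (K₂ : Set (Ultrafilter A.Total))).toNNReal
    have h2 : A.lam ω ((K₁ ⊔ K₂ : Compacts (Ultrafilter A.Total)) : Set (Ultrafilter A.Total)) =
        A.lam ω (K₁ : Set (Ultrafilter A.Total)) + A.lam ω (K₂ : Set (Ultrafilter A.Total)) := by
      rw [Compacts.coe_sup]
      exact A.lam_union_eq ω K₁.2 K₂.2 hd
    rw [h2, ENNReal.toNNReal_add (A.lam_ne_top ω _) (A.lam_ne_top ω _)]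
  sup_le' K₁ K₂ := by
    show (A.lam ω ((K₁ ⊔ K₂ : Compacts (Ultrafilter A.Total)) :
        Set (Ultrafilter A.Total))).toNNReal ≤
      (A.lam ω (K₁ : Set (Ultrafilter A.Total))).toNNReal +
      (A.lam ω (K₂ : Set (Ultrafilter A.Total))).toNNReal
    have h1 : A.lam ω ((K₁ ⊔ K₂ : Compacts (Ultrafilter A.Total)) : Set (Ultrafilter A.Total)) ≤
        A.lam ω (K₁ : Set (Ultrafilter A.Total)) + A.lam ω (K₂ : Set (Ultrafilter A.Total)) := by
      rw [Compacts.coe_sup]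
      exact A.lam_union_le ω _ _
    have h3 := ENNReal.toNNReal_mono (by
        exact ENNReal.add_ne_top.mpr ⟨A.lam_ne_top ω _, A.lam_ne_top ω _⟩) h1
    rwa [ENNReal.toNNReal_add (A.lam_ne_top ω _) (A.lam_ne_top ω _)] at h3

lemma cont_coe (ω : Ultrafilter ℕ) (K : Compacts (Ultrafilter A.Total)) :
    (A.cont ω K : ℝ≥0∞) = A.lam ω (K : Set (Ultrafilter A.Total)) :=
  ENNReal.coe_toNNReal (A.lam_ne_top ω _)

/-- The measure on `βX`. -/
noncomputable def mu (ω : Ultrafilter ℕ) : Measure (Ultrafilter A.Total) :=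
  (A.cont ω).measure

lemma mu_Cl (ω : Ultrafilter ℕ) (B : Set A.Total) :
    A.mu ω (A.Cl B) = ((A.mval ω B : ℝ≥0) : ℝ≥0∞) := by
  rw [mu, Content.measure_apply _ (A.measurableSet_Cl B),
    Content.outerMeasure_of_isOpen _ _ (A.isOpen_Cl B),
    Content.innerContent_of_isCompact _ (A.isCompact_Cl B) (A.isOpen_Cl B),
    A.cont_coe ω ⟨A.Cl B, A.isCompact_Cl B⟩, Compacts.coe_mk, A.lam_Cl ω B]

lemma mu_prob (ω : Ultrafilter ℕ) : IsProbabilityMeasure (A.mu ω) := by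
  constructor
  have : (Set.univ : Set (Ultrafilter A.Total)) = A.Cl Set.univ := (A.Cl_univ).symm
  rw [this, A.mu_Cl ω, A.mval_univ]
  simp

lemma continuous_umap (f : A.Total → A.Total) :
    Continuous (Ultrafilter.map f : Ultrafilter A.Total → Ultrafilter A.Total) := by
  refine ultrafilterBasis_is_basis.continuous_iff.mpr ?_
  rintro s ⟨B, rfl⟩
  have : (Ultrafilter.map f) ⁻¹' {u : Ultrafilter A.Total | B ∈ u} =
      {u : Ultrafilter A.Total | f ⁻¹' B ∈ u} := rfl
  rw [this]
  exact ultrafilter_isOpen_basic _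

/-- `σ̄(g)` as a homeomorphism. -/
noncomputable def permBarHomeo (g : Γ) : Ultrafilter A.Total ≃ₜ Ultrafilter A.Total where
  toFun := Ultrafilter.map (A.perm g)
  invFun := Ultrafilter.map (A.perm g).symm
  left_inv η := by
    rw [Ultrafilter.map_map, Equiv.symm_comp_self, Ultrafilter.map_id]
  right_inv η := by
    rw [Ultrafilter.map_map, Equiv.self_comp_symm, Ultrafilter.map_id]
  continuous_toFun := A.continuous_umap _
  continuous_invFun := A.continuous_umap _

lemma lam_image (ω : Ultrafilter ℕ) (g : Γ) (K : Set (Ultrafilter A.Total)) :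
    A.lam ω (Ultrafilter.map (A.perm g) '' K) = A.lam ω K := by
  have hpre : ∀ (C : Set A.Total),
      (Ultrafilter.map (A.perm g) : Ultrafilter A.Total → Ultrafilter A.Total) ⁻¹' (A.Cl C) =
      A.Cl ((A.perm g) ⁻¹' C) := fun C => rfl
  have hsymm : (A.perm g).symm = Equiv.sigmaCongrRight (fun i => (A.sigma i g).symm) := by
    rw [perm, Equiv.sigmaCongrRight_symm]
  refine le_antisymm ?_ ?_
  · refine A.le_lam ω fun B hB => ?_
    have hcov : Ultrafilter.map (A.perm g) '' K ⊆ A.Cl ((A.perm g).symm ⁻¹' B) := by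
      rw [Set.image_subset_iff, hpre]
      have : (A.perm g) ⁻¹' ((A.perm g).symm ⁻¹' B) = B := by
        rw [← Set.preimage_comp, Equiv.symm_comp_self, Set.preimage_id]
      rwa [this]
    refine (A.lam_le ω hcov).trans ?_
    rw [hsymm, A.mval_preimage ω _ B]
  · refine A.le_lam ω fun C hC => ?_
    have hcov : K ⊆ A.Cl ((A.perm g) ⁻¹' C) := by
      rw [← hpre, ← Set.image_subset_iff]
      exact hC
    refine (A.lam_le ω hcov).trans ?_
    rw [show (⇑(A.perm g)) = ⇑(Equiv.sigmaCongrRight (fun i => A.sigma i g)) from rfl,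
      A.mval_preimage ω _ C]

lemma cont_map (ω : Ultrafilter ℕ) (g : Γ) (K : Compacts (Ultrafilter A.Total)) :
    A.cont ω (K.map (A.permBarHomeo g) (A.permBarHomeo g).continuous) = A.cont ω K := by
  rw [A.cont_coe, A.cont_coe, Compacts.coe_map,
    show (⇑(A.permBarHomeo g) : Ultrafilter A.Total → Ultrafilter A.Total) =
      Ultrafilter.map (A.perm g) from rfl,
    A.lam_image ω g (K : Set (Ultrafilter A.Total))]

lemma mu_map (ω : Ultrafilter ℕ) (g : Γ) :
    Measure.map (A.permBar g) (A.mu ω) = A.mu ω := by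
  have hcont : Continuous (A.permBar g) := A.continuous_umap _
  refine Measure.ext fun s hs => ?_
  rw [Measure.map_apply hcont.measurable hs]
  have hpre : MeasurableSet (A.permBar g ⁻¹' s) := hcont.measurable hs
  rw [mu, Content.measure_apply _ hpre, Content.measure_apply _ hs]
  exact (A.cont ω).outerMeasure_preimage (A.permBarHomeo g) (fun K => A.cont_map ω g K) s

/-- The set of free ultrafilters. -/
def Fr : Set (Ultrafilter A.Total) := {η | ∀ p : A.Total, η ≠ pure p}

lemma Fr_eq : A.Fr = ⋂ p : A.Total, (A.Cl {p})ᶜ := by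
  ext η
  simp only [Fr, Set.mem_setOf_eq, Set.mem_iInter, Set.mem_compl_iff]
  constructor
  · intro h p hp
    obtain ⟨x, hx, hη⟩ := Ultrafilter.eq_pure_of_finite_mem (Set.finite_singleton p) hp
    exact h p (hx ▸ hη)
  · intro h p hp
    exact h p (by rw [hp]; exact Ultrafilter.mem_pure.mpr rfl)

lemma measurableSet_Fr : MeasurableSet A.Fr := by
  haveI := A.total_countable
  rw [Fr_eq]
  exact MeasurableSet.iInter fun p => (A.measurableSet_Cl {p}).compl

lemma mu_Fr (ω : Ultrafilter ℕ) (hω : ∀ n : ℕ, ω ≠ pure n) : A.mu ω A.Fr = 1 := by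
  haveI := A.mu_prob ω
  haveI := A.total_countable
  rw [← prob_compl_eq_zero_iff A.measurableSet_Fr]
  have hFc : A.Frᶜ = ⋃ p : A.Total, A.Cl {p} := by
    rw [Fr_eq, Set.compl_iInter]
    simp only [compl_compl]
  rw [hFc]
  refine measure_iUnion_null fun p => ?_
  rw [A.mu_Cl ω, A.mval_singleton ω hω p]
  simp

lemma bdY_eq : A.bdY = A.Fr ∩ A.Cl A.Ytot := rfl

lemma mu_bdY (ω : Ultrafilter ℕ) (hω : ∀ n : ℕ, ω ≠ pure n) : A.mu ω A.bdY = 1 := by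
  haveI := A.mu_prob ω
  rw [bdY_eq]
  refine inter_meas_one A.measurableSet_Fr (A.measurableSet_Cl _) (A.mu_Fr ω hω) ?_
  rw [A.mu_Cl ω, A.mval_Ytot ω hω]
  simp

lemma permBar_image_bdY (g : Γ) :
    A.permBar g '' A.bdY = A.Fr ∩ A.Cl ((A.perm g).symm ⁻¹' A.Ytot) := by
  have hinv : ∀ η : Ultrafilter A.Total,
      Ultrafilter.map ⇑(A.perm g).symm (Ultrafilter.map ⇑(A.perm g) η) = η := fun η => by
    rw [Ultrafilter.map_map, Equiv.symm_comp_self, Ultrafilter.map_id]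
  have hinv' : ∀ η : Ultrafilter A.Total,
      Ultrafilter.map ⇑(A.perm g) (Ultrafilter.map ⇑(A.perm g).symm η) = η := fun η => by
    rw [Ultrafilter.map_map, Equiv.self_comp_symm, Ultrafilter.map_id]
  ext η
  constructor
  · rintro ⟨ξ, ⟨hfree, hY⟩, rfl⟩
    constructor
    · intro p hp
      refine hfree ((A.perm g).symm p) ?_
      have := congrArg (Ultrafilter.map ⇑(A.perm g).symm) hp
      rwa [show A.permBar g ξ = Ultrafilter.map ⇑(A.perm g) ξ from rfl, hinv,
        Ultrafilter.map_pure] at this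
    · show (A.perm g).symm ⁻¹' A.Ytot ∈ Ultrafilter.map ⇑(A.perm g) ξ
      rw [Ultrafilter.mem_map, ← Set.preimage_comp, Equiv.symm_comp_self, Set.preimage_id]
      exact hY
  · rintro ⟨hfree, hY⟩
    refine ⟨Ultrafilter.map ⇑(A.perm g).symm η, ⟨?_, ?_⟩, hinv' η⟩
    · intro p hp
      refine hfree (A.perm g p) ?_
      have := congrArg (Ultrafilter.map ⇑(A.perm g)) hp
      rwa [hinv', Ultrafilter.map_pure] at this
    · show A.Ytot ∈ Ultrafilter.map ⇑(A.perm g).symm η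
      rw [Ultrafilter.mem_map]
      exact hY

lemma mu_core (ω : Ultrafilter ℕ) (hω : ∀ n : ℕ, ω ≠ pure n)
    (hSsymm : ∀ s ∈ S, s⁻¹ ∈ S) (hSgen : Subgroup.closure (S : Set Γ) = ⊤) :
    A.mu ω A.core = 1 := by
  haveI : Countable Γ := countable_of_symm_gen hSsymm hSgen
  haveI := A.mu_prob ω
  have hcore : A.core = ⋂ g : Γ, (A.Fr ∩ A.Cl ((A.perm g).symm ⁻¹' A.Ytot)) :=
    Set.iInter_congr fun g => A.permBar_image_bdY g
  have hterm : ∀ g : Γ, A.mu ω (A.Fr ∩ A.Cl ((A.perm g).symm ⁻¹' A.Ytot)) = 1 := by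
    intro g
    refine inter_meas_one A.measurableSet_Fr (A.measurableSet_Cl _) (A.mu_Fr ω hω) ?_
    have hsymm : (A.perm g).symm = Equiv.sigmaCongrRight (fun i => (A.sigma i g).symm) := by
      rw [perm, Equiv.sigmaCongrRight_symm]
    rw [A.mu_Cl ω, hsymm, A.mval_preimage ω _ A.Ytot, A.mval_Ytot ω hω]
    simp
  have hmeas : ∀ g : Γ, MeasurableSet (A.Fr ∩ A.Cl ((A.perm g).symm ⁻¹' A.Ytot)) :=
    fun g => A.measurableSet_Fr.inter (A.measurableSet_Cl _)
  rw [hcore, ← prob_compl_eq_zero_iff (MeasurableSet.iInter hmeas), Set.compl_iInter]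
  exact measure_iUnion_null fun g => (prob_compl_eq_zero_iff (hmeas g)).mpr (hterm g)

end SoficApprox

end AuxiliaryForSoficBoundary3
open SoficApprox MeasureTheory in
/-- **The invariant measure on the sofic boundary.**
Fixing a free ultrafilter `ω` on `ℕ`, there is a Borel probability measure `μ` on `βX`
which is the `ω`-limit of the normalised counting measures of the `X i`, is invariant
under every `σ̄(g)`, gives the core `Z` full measure, and gives the set of free
ultrafilters and `∂Y` full measure. -/
theorem exists_invariant_measure_on_sofic_boundary
    {Γ : Type u} [Group Γ] {S : Finset Γ}
    (hSsymm : ∀ s ∈ S, s⁻¹ ∈ S)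
    (hSgen : Subgroup.closure (S : Set Γ) = ⊤)
    (A : SoficApprox Γ S)
    (ω : Ultrafilter ℕ) (hω : ∀ n : ℕ, ω ≠ pure n) :
    ∃ μ : Measure (Ultrafilter A.Total), IsProbabilityMeasure μ ∧
      (∀ B : Set A.Total,
        Filter.Tendsto
          (fun i : ℕ =>
            (({x : A.X i | (⟨i, x⟩ : A.Total) ∈ B}).ncard : ℝ) / (Nat.card (A.X i) : ℝ))
          (ω : Filter ℕ)
          (nhds ((μ {η : Ultrafilter A.Total | B ∈ η}).toReal))) ∧
      (∀ g : Γ, Measure.map (A.permBar g) μ = μ) ∧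
      μ A.core = 1 ∧
      μ {η : Ultrafilter A.Total | ∀ p : A.Total, η ≠ pure p} = 1 ∧
      μ A.bdY = 1 := by
  refine ⟨A.mu ω, A.mu_prob ω, ?_, fun g => A.mu_map ω g, A.mu_core ω hω hSsymm hSgen,
    A.mu_Fr ω hω, A.mu_bdY ω hω⟩
  intro B
  show Filter.Tendsto _ (↑ω : Filter ℕ) (nhds ((A.mu ω (A.Cl B)).toReal))
  rw [A.mu_Cl ω B, ENNReal.coe_toReal]
  exact (NNReal.tendsto_coe.mpr (A.mval_tendsto ω B)).congr fun i => A.seqB_coe B i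
end

section
/- For all g, h ∈ Γ and every η ∈ Z, if σ̄(g)(η) = σ̄(h)(η) then g = h. Equivalently, for g ≠ h in Γ the sets {(η, σ̄(g)(η)) : η ∈ Z} and {(η, σ̄(h)(η)) : η ∈ Z} are disjoint. -/
open scoped BigOperators symmDiff Classical

universe u v

/-- Greedy 3-coloring: given a permutation `π` of `V` and a finite set `W` on which `π` has
no fixed points, there is a 3-coloring `c` with `c (π y) ≠ c y` for all `y ∈ W`. -/
theorem three_coloring {V : Type} [DecidableEq V] (π : Equiv.Perm V) (W : Finset V)
    (hW : ∀ y ∈ W, π y ≠ y) : ∃ c : V → Fin 3, ∀ y ∈ W, c (π y) ≠ c y := by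
  classical
  induction W using Finset.induction_on with
  | empty => exact ⟨fun _ => 0, by simp⟩
  | @insert a s ha ih =>
    obtain ⟨c, hc⟩ := ih (fun y hy => hW y (Finset.mem_insert_of_mem hy))
    have haW : π a ≠ a := hW a (Finset.mem_insert_self a s)
    obtain ⟨v, hv1, hv2⟩ :=
      (by decide : ∀ x y : Fin 3, ∃ v : Fin 3, v ≠ x ∧ v ≠ y) (c a) (c (π (π a)))
    refine ⟨Function.update c (π a) v, ?_⟩
    intro y hy
    rcases Finset.mem_insert.mp hy with rfl | hy'
    · rw [Function.update_self, Function.update_of_ne (fun hh => haW hh.symm)]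
      exact hv1
    · have hya2 : y ∈ insert a s → True := fun _ => trivial
      by_cases hya : y = π a
      · subst hya
        have hpy : π (π a) ≠ π a := fun hh => haW (π.injective hh)
        rw [Function.update_self, Function.update_of_ne hpy]
        exact fun hh => hv2 hh.symm
      · have hyne : y ≠ a := fun hh => ha (hh ▸ hy')
        have hpyne : π y ≠ π a := fun hh => hyne (π.injective hh)
        rw [Function.update_of_ne hpyne, Function.update_of_ne hya]
        exact hc y hy'

open SoficApprox in
/-- **Disjointness of the `σ`-diagonals over the core.**
If `σ̄(g)(η) = σ̄(h)(η)` for some `η` in the core `Z`, then `g = h`; equivalently, for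
`g ≠ h` the sets `{(η, σ̄(g)(η)) : η ∈ Z}` and `{(η, σ̄(h)(η)) : η ∈ Z}` are disjoint. -/
theorem permBar_injective_on_core
    {Γ : Type u} [Group Γ] {S : Finset Γ}
    (hSsymm : ∀ s ∈ S, s⁻¹ ∈ S)
    (hSgen : Subgroup.closure (S : Set Γ) = ⊤)
    (A : SoficApprox Γ S) :
    (∀ g h : Γ, ∀ η ∈ A.core, A.permBar g η = A.permBar h η → g = h) ∧
    (∀ g h : Γ, g ≠ h →
      Disjoint
        {p : Ultrafilter A.Total × Ultrafilter A.Total |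
          ∃ η ∈ A.core, p = (η, A.permBar g η)}
        {p : Ultrafilter A.Total × Ultrafilter A.Total |
          ∃ η ∈ A.core, p = (η, A.permBar h η)}) := by
  classical
  have part1 : ∀ g h : Γ, ∀ η ∈ A.core, A.permBar g η = A.permBar h η → g = h := by
    intro g h η hη heq
    by_contra hne
    set w := h * g⁻¹ with hwdef
    have hw : w ≠ 1 := by
      intro hw1
      rw [hwdef, mul_inv_eq_one] at hw1
      exact hne hw1.symm
    obtain ⟨i1, hi1⟩ := A.F_exhausts g
    obtain ⟨i2, hi2⟩ := A.F_exhausts g⁻¹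
    obtain ⟨i3, hi3⟩ := A.F_exhausts h
    obtain ⟨i4, hi4⟩ := A.F_exhausts w
    set i₀ := max (max i1 i2) (max i3 i4) with hi₀
    have hg : ∀ i, i₀ ≤ i → g ∈ A.F i := fun i hi =>
      A.F_mono (le_trans (le_trans (le_max_left _ _) (le_max_left _ _)) hi) hi1
    have hginv : ∀ i, i₀ ≤ i → g⁻¹ ∈ A.F i := fun i hi =>
      A.F_mono (le_trans (le_trans (le_max_right _ _) (le_max_left _ _)) hi) hi2
    have hh : ∀ i, i₀ ≤ i → h ∈ A.F i := fun i hi =>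
      A.F_mono (le_trans (le_trans (le_max_left _ _) (le_max_right _ _)) hi) hi3
    have hwF : ∀ i, i₀ ≤ i → w ∈ A.F i := fun i hi =>
      A.F_mono (le_trans (le_trans (le_max_right _ _) (le_max_right _ _)) hi) hi4
    obtain ⟨ζ, hζY, hζ⟩ := Set.mem_iInter.mp hη g⁻¹
    -- the set B of "good" points
    set B : Set A.Total := {p | p.2 ∈ A.Y p.1 ∧ i₀ ≤ p.1} with hBdef
    have hBζ : B ∈ ζ := by
      have h1 : A.Ytot ∈ ζ := hζY.2
      have h2 : {p : A.Total | i₀ ≤ p.1} ∈ ζ := by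
        by_contra hcon
        have hcompl : {p : A.Total | i₀ ≤ p.1}ᶜ ∈ ζ :=
          (Ultrafilter.compl_mem_iff_notMem).mpr hcon
        have hfin : ({p : A.Total | i₀ ≤ p.1}ᶜ).Finite := by
          have hsub : {p : A.Total | i₀ ≤ p.1}ᶜ ⊆
              ⋃ i ∈ Set.Iio i₀, Set.range (Sigma.mk i : A.X i → A.Total) := by
            intro p hp
            have : p.1 < i₀ := Nat.lt_of_not_le hp
            exact Set.mem_biUnion this ⟨p.2, rfl⟩
          refine Set.Finite.subset (Set.Finite.biUnion (Set.finite_Iio i₀) ?_) hsub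
          intro i _
          haveI := A.finX i
          exact Set.finite_range _
        obtain ⟨x, _, hx⟩ := Ultrafilter.eq_pure_of_finite_mem hfin hcompl
        exact hζY.1 x hx
      exact Filter.inter_mem h1 h2
    -- agreement of maps on B
    have hmapcongr : ∀ f f' : A.Total → A.Total, (∀ p ∈ B, f p = f' p) →
        Ultrafilter.map f ζ = Ultrafilter.map f' ζ := by
      intro f f' hff
      apply Ultrafilter.coe_injective
      rw [Ultrafilter.coe_map, Ultrafilter.coe_map]
      exact Filter.map_congr (Filter.eventuallyEq_of_mem hBζ hff)
    have hcomp : ∀ k : Γ, A.permBar k η =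
        Ultrafilter.map (fun p => A.perm k (A.perm g⁻¹ p)) ζ := by
      intro k
      rw [← hζ]
      apply Ultrafilter.coe_injective
      rw [permBar, permBar, Ultrafilter.coe_map, Ultrafilter.coe_map, Ultrafilter.coe_map,
        Filter.map_map]
      rfl
    have hone : ∀ (i : ℕ), ∀ y ∈ A.Y i, A.sigma i 1 y = y := by
      intro i y hy
      have h2 := A.sigma_mul i 1 (A.F_one i) 1 (A.F_one i) y hy
      rw [one_mul] at h2
      exact (A.sigma i 1).injective h2
    have e1 : A.permBar g η = ζ := by
      rw [hcomp g]
      have : Ultrafilter.map (fun p => A.perm g (A.perm g⁻¹ p)) ζ =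
          Ultrafilter.map id ζ := by
        apply hmapcongr
        rintro ⟨i, x⟩ ⟨hx, hi⟩
        show (⟨i, A.sigma i g (A.sigma i g⁻¹ x)⟩ : A.Total) = ⟨i, x⟩
        rw [A.sigma_mul i g (hg i hi) g⁻¹ (hginv i hi) x hx, mul_inv_cancel, hone i x hx]
      rw [this]
      apply Ultrafilter.coe_injective
      rw [Ultrafilter.coe_map, Filter.map_id]
    have e2 : A.permBar h η = Ultrafilter.map (A.perm w) ζ := by
      rw [hcomp h]
      apply hmapcongr
      rintro ⟨i, x⟩ ⟨hx, hi⟩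
      show (⟨i, A.sigma i h (A.sigma i g⁻¹ x)⟩ : A.Total) = ⟨i, A.sigma i w x⟩
      rw [A.sigma_mul i h (hh i hi) g⁻¹ (hginv i hi) x hx]
    have hmapw : Ultrafilter.map (A.perm w) ζ = ζ := by
      rw [← e2, ← heq, e1]
    -- 3-coloring of the total space
    have hcol : ∀ i : ℕ, ∃ c : A.X i → Fin 3,
        ∀ y, y ∈ A.Y i → i₀ ≤ i → c (A.sigma i w y) ≠ c y := by
      intro i
      by_cases hi : i₀ ≤ i
      · haveI := A.finX i
        haveI := Fintype.ofFinite (A.X i)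
        obtain ⟨c, hc⟩ := three_coloring (A.sigma i w) (A.Y i).toFinset
          (fun y hy => A.sigma_free i w (hwF i hi) hw y (Set.mem_toFinset.mp hy))
        exact ⟨c, fun y hy _ => hc y (Set.mem_toFinset.mpr hy)⟩
      · exact ⟨fun _ => 0, fun y _ hi' => absurd hi' hi⟩
    choose c hc using hcol
    set cT : A.Total → Fin 3 := fun p => c p.1 p.2 with hcTdef
    obtain ⟨j, hj⟩ := Ultrafilter.eq_pure_of_finite (Ultrafilter.map cT ζ)
    have hjmem : cT ⁻¹' {j} ∈ ζ := by
      have : ({j} : Set (Fin 3)) ∈ Ultrafilter.map cT ζ := by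
        rw [hj]; exact rfl
      exact Ultrafilter.mem_map.mp this
    have hjmem2 : (fun p => cT (A.perm w p)) ⁻¹' {j} ∈ ζ := by
      have : cT ⁻¹' {j} ∈ Ultrafilter.map (A.perm w) ζ := by rw [hmapw]; exact hjmem
      exact Ultrafilter.mem_map.mp this
    have hint : (B ∩ (cT ⁻¹' {j} ∩ (fun p => cT (A.perm w p)) ⁻¹' {j})).Nonempty :=
      Ultrafilter.nonempty_of_mem (Filter.inter_mem hBζ (Filter.inter_mem hjmem hjmem2))
    obtain ⟨⟨i, x⟩, ⟨hx, hi⟩, hj1, hj2⟩ := hint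
    have hcontra := hc i x hx hi
    have hj1' : c i x = j := hj1
    have hj2' : c i (A.sigma i w x) = j := hj2
    rw [hj1', hj2'] at hcontra
    exact hcontra rfl
  refine ⟨part1, ?_⟩
  intro g h hgh
  rw [Set.disjoint_left]
  rintro p ⟨η, hη, rfl⟩ ⟨η', hη', hp'⟩
  have h1 : η = η' := congrArg Prod.fst hp'
  subst h1
  have h2 : A.permBar g η = A.permBar h η := congrArg Prod.snd hp'
  exact hgh (part1 g h η hη h2)
end

section
/- For every w ∈ F_S the following are equivalent: (i) τ̄(w)(η) = η for every η ∈ Z; (ii) π(w) = 1. In other words, the pointwise stabiliser of the core Z in the free group F_S (acting via τ̄) is exactly the kernel of π : F_S → Γ. -/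
open scoped BigOperators symmDiff Classical

universe u v

namespace SoficAux
open SoficApprox

lemma katetov {α : Type*} (f : Equiv.Perm α) (B : Set α) (hB : ∀ a ∈ B, f a ≠ a)
    {η : Ultrafilter α} (hBη : B ∈ η) : Ultrafilter.map (⇑f) η ≠ η := by
  intro heq
  set 𝒮 : Set (Set α) := {C | C ⊆ B ∧ ∀ x ∈ C, f x ∉ C} with h𝒮
  obtain ⟨M, hM⟩ := zorn_subset 𝒮 (by
    intro c hc hchain
    refine ⟨⋃₀ c, ⟨?_, ?_⟩, fun s hs => Set.subset_sUnion_of_mem hs⟩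
    · exact Set.sUnion_subset fun C hC => (hc hC).1
    · rintro x ⟨C1, hC1, hx1⟩ ⟨C2, hC2, hx2⟩
      rcases eq_or_ne C1 C2 with rfl | hne
      · exact (hc hC1).2 x hx1 hx2
      · rcases hchain hC1 hC2 hne with h | h
        · exact (hc hC2).2 x (h hx1) hx2
        · exact (hc hC1).2 x hx1 (h hx2))
  have hMS : M ∈ 𝒮 := hM.1
  have hcover : B ⊆ M ∪ ⇑f '' M ∪ ⇑f ⁻¹' M := by
    intro a ha
    by_contra hna
    simp only [Set.mem_union, not_or, Set.mem_preimage] at hna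
    obtain ⟨⟨haM, haim⟩, hapre⟩ := hna
    have hins : insert a M ∈ 𝒮 := by
      refine ⟨Set.insert_subset ha hMS.1, ?_⟩
      intro x hx
      rcases Set.mem_insert_iff.mp hx with rfl | hxM
      · intro hfx
        rcases Set.mem_insert_iff.mp hfx with h1 | h1
        · exact hB x ha h1
        · exact hapre h1
      · intro hfx
        rcases Set.mem_insert_iff.mp hfx with h1 | h1
        · exact haim ⟨x, hxM, h1⟩
        · exact hMS.2 x hxM h1
    have := hM.2 hins (Set.subset_insert a M)
    exact haM (this (Set.mem_insert a M))
  have hU : M ∪ ⇑f '' M ∪ ⇑f ⁻¹' M ∈ η := Filter.mem_of_superset hBη hcover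
  have himg : ∀ D : Set α, D ∈ η → ⇑f '' D ∈ η := by
    intro D hD
    have : ⇑f '' D ∈ Ultrafilter.map (⇑f) η := by
      rw [Ultrafilter.mem_map]
      exact Filter.mem_of_superset hD (Set.subset_preimage_image _ _)
    rwa [heq] at this
  rcases Ultrafilter.union_mem_iff.mp hU with hU' | hpre
  · rcases Ultrafilter.union_mem_iff.mp hU' with hMη | him
    · obtain ⟨x, hxM, y, hyM, hxy⟩ := Ultrafilter.nonempty_of_mem
        (Filter.inter_mem hMη (himg M hMη))
      exact hMS.2 y hyM (hxy ▸ hxM)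
    · obtain ⟨x, hx1, hx2⟩ := Ultrafilter.nonempty_of_mem
        (Filter.inter_mem him (himg _ him))
      obtain ⟨y, hyM, hyx⟩ := hx1
      obtain ⟨z, ⟨z', hz'M, hz'z⟩, hzx⟩ := hx2
      have : y = f z' := f.injective (by rw [hyx, hz'z, hzx])
      exact hMS.2 z' hz'M (this ▸ hyM)
  · obtain ⟨x, hx1, hx2⟩ := Ultrafilter.nonempty_of_mem
      (Filter.inter_mem hpre (himg _ hpre))
    obtain ⟨y, hy, hyx⟩ := hx2
    have hxM : x ∈ M := hyx ▸ hy
    exact hMS.2 x hxM hx1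

variable {Γ : Type u} [Group Γ] {S : Finset Γ}

lemma perm_apply (A : SoficApprox Γ S) (g : Γ) (i : ℕ) (x : A.X i) :
    A.perm g ⟨i, x⟩ = ⟨i, A.sigma i g x⟩ := rfl

lemma sigma_one (A : SoficApprox Γ S) (i : ℕ) {y : A.X i} (hy : y ∈ A.Y i) :
    A.sigma i 1 y = y := by
  have h := A.sigma_mul i 1 (A.F_one i) 1 (A.F_one i) y hy
  rw [mul_one] at h
  exact (A.sigma i 1).injective h

lemma exists_F_bound (A : SoficApprox Γ S) (T : Finset Γ) :
    ∃ N, ∀ i, N ≤ i → ∀ g ∈ T, g ∈ A.F i := by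
  classical
  choose f hf using A.F_exhausts
  refine ⟨T.sup f, fun i hi g hg => ?_⟩
  exact Finset.mem_of_subset (A.F_mono (le_trans (Finset.le_sup hg) hi)) (hf g)

lemma free_compl_mem {α : Type*} {η : Ultrafilter α} (hfree : ∀ p, η ≠ pure p)
    {s : Set α} (hs : s.Finite) : sᶜ ∈ η := by
  rw [Ultrafilter.compl_mem_iff_notMem]
  intro h
  obtain ⟨x, -, hx⟩ := Ultrafilter.eq_pure_of_finite_mem hs h
  exact hfree x hx

lemma low_finite (A : SoficApprox Γ S) (N : ℕ) : {p : A.Total | p.1 < N}.Finite := by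
  have h : {p : A.Total | p.1 < N} ⊆ ⋃ i ∈ Finset.range N, Set.range (Sigma.mk i) := by
    rintro ⟨i, x⟩ h
    simp only [Set.mem_setOf_eq] at h
    simp only [Set.mem_iUnion, Finset.mem_range]
    exact ⟨i, h, x, rfl⟩
  refine Set.Finite.subset (Set.Finite.biUnion (Finset.range N).finite_toSet fun i _ => ?_) h
  have := A.finX i
  exact Set.finite_range _

lemma high_mem {A : SoficApprox Γ S} {η : Ultrafilter A.Total}
    (hfree : ∀ p, η ≠ pure p) (N : ℕ) : {p : A.Total | N ≤ p.1} ∈ η := by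
  have h := free_compl_mem hfree (low_finite A N)
  have heq : {p : A.Total | p.1 < N}ᶜ = {p : A.Total | N ≤ p.1} := by
    ext p; simp [not_lt]
  rwa [heq] at h

lemma uf_map_congr {α β : Type*} {f g : α → β} {η : Ultrafilter α}
    (h : {x | f x = g x} ∈ η) : Ultrafilter.map f η = Ultrafilter.map g η := by
  apply Ultrafilter.coe_injective
  simp only [Ultrafilter.coe_map]
  exact Filter.map_congr h

lemma uf_map_map {α β γ' : Type*} (f : β → γ') (g : α → β) (η : Ultrafilter α) :
    Ultrafilter.map f (Ultrafilter.map g η) = Ultrafilter.map (f ∘ g) η := by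
  apply Ultrafilter.coe_injective
  simp only [Ultrafilter.coe_map]
  exact Filter.map_map

lemma uf_map_id {α : Type*} (η : Ultrafilter α) : Ultrafilter.map id η = η := by
  apply Ultrafilter.coe_injective
  simp only [Ultrafilter.coe_map]
  exact Filter.map_id

lemma tau_eq_perm (A : SoficApprox Γ S) (w : FreeGroup ↥S) :
    ∃ N, ∀ i, N ≤ i → ∀ y ∈ A.Y i,
      A.tau w ⟨i, y⟩ = ⟨i, A.sigma i (pihom S w) y⟩ := by
  classical
  suffices h : ∀ L : List (↥S × Bool), ∃ N, ∀ i, N ≤ i → ∀ y ∈ A.Y i,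
      (List.map (fun x => bif x.2 then A.perm (x.1 : Γ) else (A.perm (x.1 : Γ))⁻¹) L).prod ⟨i, y⟩
        = ⟨i, A.sigma i ((List.map (fun x => bif x.2 then (x.1 : Γ) else (x.1 : Γ)⁻¹) L).prod) y⟩ by
    obtain ⟨N, hN⟩ := h w.toWord
    refine ⟨N, fun i hi y hy => ?_⟩
    conv_lhs => rw [← FreeGroup.mk_toWord (x := w)]
    conv_rhs => rw [← FreeGroup.mk_toWord (x := w)]
    rw [SoficApprox.tau, pihom, FreeGroup.lift_mk, FreeGroup.lift_mk]
    exact hN i hi y hy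
  intro L
  induction L with
  | nil =>
    refine ⟨0, fun i _ y hy => ?_⟩
    simp only [List.map_nil, List.prod_nil]
    rw [sigma_one A i hy]
    rfl
  | cons hd tl ih =>
    obtain ⟨N1, h1⟩ := ih
    set h : Γ := (List.map (fun x => bif x.2 then (x.1 : Γ) else (x.1 : Γ)⁻¹) tl).prod with hh
    obtain ⟨N2, h2⟩ := exists_F_bound A {(hd.1 : Γ), h, ((hd.1 : Γ))⁻¹ * h}
    refine ⟨max N1 N2, fun i hi y hy => ?_⟩
    have hi1 : N1 ≤ i := le_trans (le_max_left _ _) hi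
    have hi2 : N2 ≤ i := le_trans (le_max_right _ _) hi
    have hs : (hd.1 : Γ) ∈ A.F i := h2 i hi2 _ (by simp)
    have hhF : h ∈ A.F i := h2 i hi2 _ (by simp)
    have hsinv : ((hd.1 : Γ))⁻¹ * h ∈ A.F i := h2 i hi2 _ (by simp)
    simp only [List.map_cons, List.prod_cons, Equiv.Perm.mul_apply]
    rw [h1 i hi1 y hy, ← hh]
    rcases hd with ⟨s, b⟩
    cases b
    · simp only [cond_false]
      rw [Equiv.Perm.inv_def, Equiv.symm_apply_eq, perm_apply]
      have := A.sigma_mul i (s : Γ) hs (((s : Γ))⁻¹ * h) hsinv y hy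
      rw [mul_inv_cancel_left] at this
      rw [this]
    · simp only [cond_true]
      rw [perm_apply, A.sigma_mul i (s : Γ) hs h hhF y hy]

lemma core_free_and_Ytot {A : SoficApprox Γ S} {η : Ultrafilter A.Total}
    (hη : η ∈ A.core) : (∀ p, η ≠ pure p) ∧ A.Ytot ∈ η := by
  have h1 : η ∈ A.permBar 1 '' A.bdY := Set.mem_iInter.mp hη 1
  obtain ⟨ζ, hζ, hmap⟩ := h1
  have hid : A.permBar 1 ζ = ζ := by
    rw [SoficApprox.permBar]
    have := uf_map_congr (f := ⇑(A.perm (1 : Γ))) (g := id) (η := ζ)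
      (Filter.mem_of_superset hζ.2 (by
        rintro ⟨i, x⟩ hp
        show A.perm 1 ⟨i, x⟩ = ⟨i, x⟩
        rw [perm_apply, sigma_one A i hp]))
    rw [this, uf_map_id]
  rw [hid] at hmap
  exact hmap ▸ hζ

lemma core_mem_of {A : SoficApprox Γ S} {η : Ultrafilter A.Total}
    (hfree : ∀ p, η ≠ pure p) (hT : ∀ g : Γ, (⇑(A.perm g) '' A.Ytot) ∈ η) :
    η ∈ A.core := by
  refine Set.mem_iInter.mpr fun g => ?_
  refine ⟨Ultrafilter.map (⇑(A.perm g)⁻¹) η, ⟨?_, ?_⟩, ?_⟩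
  · intro p hp
    have : Ultrafilter.map (⇑(A.perm g)) (Ultrafilter.map (⇑(A.perm g)⁻¹) η) = η := by
      rw [uf_map_map]
      have hcomp : (⇑(A.perm g)) ∘ (⇑(A.perm g)⁻¹) = id := by
        funext x; simp [Equiv.Perm.inv_def]
      rw [hcomp, uf_map_id]
    rw [hp] at this
    exact hfree _ (by rw [← this]; rfl)
  · rw [Ultrafilter.mem_map]
    have : (⇑(A.perm g)⁻¹) ⁻¹' A.Ytot = ⇑(A.perm g) '' A.Ytot := by
      rw [Equiv.image_eq_preimage_symm, Equiv.Perm.inv_def]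
    rw [this]
    exact hT g
  · show Ultrafilter.map (⇑(A.perm g)) _ = η
    rw [uf_map_map]
    have hcomp : (⇑(A.perm g)) ∘ (⇑(A.perm g)⁻¹) = id := by
      funext x; simp [Equiv.Perm.inv_def]
    rw [hcomp, uf_map_id]

lemma inter_nonempty (A : SoficApprox Γ S) (I : Finset Γ) (N : ℕ) :
    ∃ p ∈ ⋂ g ∈ I, ⇑(A.perm g) '' A.Ytot, N ≤ p.1 := by
  classical
  have hc1 : (0 : ℝ) < 1 / (I.card + 1) := by positivity
  obtain ⟨i, hεi, hiN⟩ :=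
    ((A.eps_lim.eventually_lt_const hc1).and (Filter.eventually_ge_atTop N)).exists
  haveI := A.finX i; haveI := A.neX i
  set n := Nat.card (A.X i) with hn'
  set m := (A.Y i).ncard with hm'
  have hn : 0 < n := Nat.card_pos
  have hmn : m ≤ n := by
    have := Set.ncard_le_ncard (Set.subset_univ (A.Y i)) Set.finite_univ
    rwa [Set.ncard_univ] at this
  have hbound : ∀ J : Finset Γ,
      ((⋂ g ∈ J, ⇑(A.sigma i g) '' A.Y i)ᶜ).ncard ≤ J.card * (n - m) := by
    intro J
    induction J using Finset.induction_on with
    | empty => simp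
    | @insert a J ha ih =>
      rw [Finset.set_biInter_insert, Set.compl_inter]
      have h1 : ((⇑(A.sigma i a) '' A.Y i)ᶜ).ncard = n - m := by
        have him : (⇑(A.sigma i a) '' A.Y i).ncard = m :=
          Set.ncard_image_of_injective _ (Equiv.injective _)
        have := Set.ncard_add_ncard_compl (⇑(A.sigma i a) '' A.Y i)
        rw [him] at this
        omega
      calc ((⇑(A.sigma i a) '' A.Y i)ᶜ ∪ (⋂ g ∈ J, ⇑(A.sigma i g) '' A.Y i)ᶜ).ncard
          ≤ ((⇑(A.sigma i a) '' A.Y i)ᶜ).ncard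
            + ((⋂ g ∈ J, ⇑(A.sigma i g) '' A.Y i)ᶜ).ncard := Set.ncard_union_le _ _
        _ ≤ (n - m) + J.card * (n - m) := by rw [h1]; exact Nat.add_le_add_left ih _
        _ = (insert a J).card * (n - m) := by
            rw [Finset.card_insert_of_notMem ha]; ring
  have hlt : I.card * (n - m) < n := by
    have hY := A.Y_large i
    have hε0 : (0 : ℝ) < A.eps i := A.eps_pos i
    have hnR : (0 : ℝ) < n := by exact_mod_cast hn
    have h1 : (n : ℝ) - m ≤ A.eps i * n := by rw [hn', hm'] at *; nlinarith
    have hc : (I.card : ℝ) * A.eps i < 1 := by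
      have h2 : (I.card : ℝ) * A.eps i ≤ I.card * (1 / (I.card + 1)) :=
        mul_le_mul_of_nonneg_left hεi.le (Nat.cast_nonneg _)
      have h3 : (I.card : ℝ) * (1 / (I.card + 1)) < 1 := by
        rw [mul_one_div, div_lt_one (by positivity)]; linarith
      linarith
    have h4 : ((I.card * (n - m) : ℕ) : ℝ) < n := by
      push_cast [Nat.cast_sub hmn]
      calc (I.card : ℝ) * ((n : ℝ) - m) ≤ I.card * (A.eps i * n) :=
            mul_le_mul_of_nonneg_left h1 (Nat.cast_nonneg _)
        _ = (I.card * A.eps i) * n := by ring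
        _ < 1 * n := mul_lt_mul_of_pos_right hc hnR
        _ = n := one_mul _
    exact_mod_cast h4
  have hne : (⋂ g ∈ I, ⇑(A.sigma i g) '' A.Y i).Nonempty := by
    by_contra hemp
    rw [Set.not_nonempty_iff_eq_empty] at hemp
    have hu : ((⋂ g ∈ I, ⇑(A.sigma i g) '' A.Y i)ᶜ).ncard = n := by
      rw [hemp, Set.compl_empty, Set.ncard_univ]
    have := hbound I
    omega
  obtain ⟨x, hx⟩ := hne
  refine ⟨⟨i, x⟩, ?_, hiN⟩
  refine Set.mem_iInter₂.mpr fun g hg => ?_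
  obtain ⟨y, hy, hyx⟩ := Set.mem_iInter₂.mp hx g hg
  exact ⟨⟨i, y⟩, hy, by rw [perm_apply, hyx]⟩

lemma core_nonempty (A : SoficApprox Γ S) : A.core.Nonempty := by
  classical
  set T : Γ → Set A.Total := fun g => ⇑(A.perm g) '' A.Ytot with hT
  have key : ∀ I : Finset Γ, (⋂ g ∈ I, T g).Infinite := by
    intro I
    by_contra hfin
    rw [Set.not_infinite] at hfin
    have himg : (Sigma.fst '' (⋂ g ∈ I, T g)).Finite := hfin.image _
    obtain ⟨b, hb⟩ := himg.bddAbove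
    obtain ⟨p, hp, hple⟩ := inter_nonempty A I (b + 1)
    have := hb (Set.mem_image_of_mem _ hp)
    omega
  set L : Filter A.Total := Filter.cofinite ⊓ ⨅ g : Γ, Filter.principal (T g) with hL
  have hne : L.NeBot := by
    rw [← Filter.forall_mem_nonempty_iff_neBot]
    intro s hs
    rw [hL, Filter.mem_inf_iff] at hs
    obtain ⟨t1, ht1, t2, ht2, rfl⟩ := hs
    rw [Filter.mem_iInf'] at ht2
    obtain ⟨I, hIfin, V, hV, -, hEq, -⟩ := ht2
    have hsub : (⋂ g ∈ hIfin.toFinset, T g) ⊆ t2 := by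
      rw [hEq]
      intro x hx
      refine Set.mem_iInter₂.mpr fun g hg => ?_
      exact hV g (Set.mem_iInter₂.mp hx g (hIfin.mem_toFinset.mpr hg))
    have hdiff : ((⋂ g ∈ hIfin.toFinset, T g) \ t1ᶜ).Infinite :=
      (key hIfin.toFinset).diff (Filter.mem_cofinite.mp ht1)
    obtain ⟨x, hx1, hx2⟩ := hdiff.nonempty
    exact ⟨x, by simpa using hx2, hsub hx1⟩
  refine ⟨Ultrafilter.of L, ?_⟩
  have hle := Ultrafilter.of_le L
  have hTmem : ∀ g, T g ∈ Ultrafilter.of L :=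
    fun g => hle (Filter.mem_inf_of_right (Filter.mem_iInf_of_mem g (Filter.mem_principal_self _)))
  have hfree : ∀ p, Ultrafilter.of L ≠ pure p := by
    intro p hp
    have h1 : ({p}ᶜ : Set A.Total) ∈ Ultrafilter.of L :=
      hle (Filter.mem_inf_of_left ((Set.finite_singleton p).compl_mem_cofinite))
    rw [hp] at h1
    simp at h1
  exact core_mem_of hfree hTmem

end SoficAux

open SoficApprox in
/-- **The stabiliser of the core is the kernel of `π`.**
A word `w ∈ F_S` fixes every point of the core `Z` (acting via `τ̄`) if and only if
`π(w) = 1`; i.e. the pointwise stabiliser of `Z` in `F_S` is exactly `ker(π : F_S → Γ)`. -/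
theorem stabilizer_core_eq_ker_pi
    {Γ : Type u} [Group Γ] {S : Finset Γ}
    (hSsymm : ∀ s ∈ S, s⁻¹ ∈ S)
    (hSgen : Subgroup.closure (S : Set Γ) = ⊤)
    (A : SoficApprox Γ S) :
    ∀ w : FreeGroup ↥S,
      (∀ η ∈ A.core, Ultrafilter.map (A.tau w) η = η) ↔ pihom S w = 1 := by
  intro w
  constructor
  · intro H
    by_contra hg1
    obtain ⟨η, hη⟩ := SoficAux.core_nonempty A
    obtain ⟨hfree, hY⟩ := SoficAux.core_free_and_Ytot hη
    obtain ⟨N1, hN1⟩ := SoficAux.tau_eq_perm A w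
    obtain ⟨N2, hN2⟩ := SoficAux.exists_F_bound A {pihom S w}
    set g := pihom S w with hg
    set N := max N1 N2 with hN
    set B : Set A.Total := A.Ytot ∩ {p | N ≤ p.1} with hB
    have hGood : B ∈ η := Filter.inter_mem hY (SoficAux.high_mem hfree N)
    have hagree : {p : A.Total | A.tau w p = A.perm g p} ∈ η := by
      refine Filter.mem_of_superset hGood ?_
      rintro ⟨i, y⟩ ⟨hy, hi⟩
      have hi1 : N1 ≤ i := le_trans (le_max_left _ _) hi
      show A.tau w ⟨i, y⟩ = A.perm g ⟨i, y⟩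
      rw [hN1 i hi1 y hy, SoficAux.perm_apply]
    have heq : Ultrafilter.map (⇑(A.tau w)) η = Ultrafilter.map (⇑(A.perm g)) η :=
      SoficAux.uf_map_congr hagree
    have hfix : Ultrafilter.map (⇑(A.perm g)) η = η := by rw [← heq]; exact H η hη
    have hmoves : ∀ a ∈ B, A.perm g a ≠ a := by
      rintro ⟨i, y⟩ ⟨hy, hi⟩ hcon
      rw [SoficAux.perm_apply] at hcon
      have hyy : A.sigma i g y = y := sigma_mk_injective hcon
      exact A.sigma_free i g (hN2 i (le_trans (le_max_right _ _) hi) g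
        (Finset.mem_singleton_self _)) hg1 y hy hyy
    exact SoficAux.katetov (A.perm g) B hmoves hGood hfix
  · intro hw η hη
    obtain ⟨hfree, hY⟩ := SoficAux.core_free_and_Ytot hη
    obtain ⟨N1, hN1⟩ := SoficAux.tau_eq_perm A w
    have hGood : (A.Ytot ∩ {p : A.Total | N1 ≤ p.1}) ∈ η :=
      Filter.inter_mem hY (SoficAux.high_mem hfree N1)
    have hagree : {p : A.Total | A.tau w p = id p} ∈ η := by
      refine Filter.mem_of_superset hGood ?_
      rintro ⟨i, y⟩ ⟨hy, hi⟩
      show A.tau w ⟨i, y⟩ = ⟨i, y⟩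
      rw [hN1 i hi y hy, hw, SoficAux.sigma_one A i hy]
    rw [SoficAux.uf_map_congr hagree, SoficAux.uf_map_id]
end
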